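/- arXiv:2012.12670 — 6 statements merged into one kernel-verified Lean document; each statement's English description precedes it below -/
import Mathlib

section
/- (Regular distributions are characterised by the test functions.) Let d ∈ ℕ and let μ, ν be regular probability measures on ℝ^d. If ∫ f dμ = ∫ f dν for every test function f ∈ F_d, then μ = ν. -/
open MeasureTheory Set

/-- The open interval (a,b) in ℝ, with possibly infinite endpoints a, b ∈ EReal. -/
def erealIoo (a b : EReal) : Set ℝ := {x : ℝ | a < (x : EReal) ∧ (x : EReal) < b}

/-- A measure on ℝ is regular on (a,b) if it is supported in (a,b) and equivalent to
the restriction of Lebesgue measure to (a,b). -/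
def regularOn (γ : Measure ℝ) (a b : EReal) : Prop :=
  γ (erealIoo a b)ᶜ = 0 ∧
  γ ≪ volume.restrict (erealIoo a b) ∧
  volume.restrict (erealIoo a b) ≪ γ

/-- A measure on ℝ^d is regular if it is equivalent to Lebesgue measure. -/
def regular {d : ℕ} (ν : Measure (Fin d → ℝ)) : Prop :=
  ν ≪ volume ∧ volume ≪ ν

/-- The set of test functions F_d: measurable f : ℝ^d → ℝ with range in some open interval
(a,b), such that f_#ν is regular on (a,b) whenever ν is a regular probability measure. -/
def testFun {d : ℕ} (f : (Fin d → ℝ) → ℝ) : Prop :=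
  Measurable f ∧
  ∃ a b : EReal, a < b ∧ (∀ x, a < (f x : EReal) ∧ (f x : EReal) < b) ∧
    ∀ ν : Measure (Fin d → ℝ), IsProbabilityMeasure ν → regular ν →
      regularOn (ν.map f) a b

section auxlemmas

open Real Filter Topology MeasurableSpace

lemma image_null {f : ℝ → ℝ} (hf : Differentiable ℝ f) {s : Set ℝ}
    (hs : volume s = 0) : volume (f '' s) = 0 :=
  addHaar_image_eq_zero_of_differentiableOn_of_addHaar_eq_zero volume hf.differentiableOn hs

lemma preimage_arctan_null {N : Set ℝ}
    (hN : volume (N ∩ Ioo (-(π/2)) (π/2)) = 0) :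
    volume (Real.arctan ⁻¹' N) = 0 := by
  have hsub : Real.arctan ⁻¹' N ⊆ Real.tan '' (N ∩ Ioo (-(π/2)) (π/2)) := by
    intro x hx
    exact ⟨Real.arctan x, ⟨hx, Real.neg_pi_div_two_lt_arctan x, Real.arctan_lt_pi_div_two x⟩,
      Real.tan_arctan x⟩
  refine measure_mono_null hsub ?_
  refine addHaar_image_eq_zero_of_differentiableOn_of_addHaar_eq_zero volume ?_ hN
  intro y hy
  have hcos : Real.cos y ≠ 0 := (Real.cos_pos_of_mem_Ioo hy.2).ne'
  exact (Real.differentiableAt_tan.mpr hcos).differentiableWithinAt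

lemma null_of_preimage_arctan_null {B : Set ℝ}
    (h : volume (Real.arctan ⁻¹' B) = 0) :
    volume (B ∩ Ioo (-(π/2)) (π/2)) = 0 := by
  have hsub : B ∩ Ioo (-(π/2)) (π/2) ⊆ Real.arctan '' (Real.arctan ⁻¹' B) := by
    intro y hy
    refine ⟨Real.tan y, ?_, Real.arctan_tan hy.2.1 hy.2.2⟩
    simp only [mem_preimage, Real.arctan_tan hy.2.1 hy.2.2]
    exact hy.1
  exact measure_mono_null hsub (image_null Real.differentiable_arctan h)

lemma affine_preimage_null {m a : ℝ} (hm : m ≠ 0) {S : Set ℝ} (hS : volume S = 0) :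
    volume ((fun y => m * y + a) ⁻¹' S) = 0 := by
  have hsub : (fun y => m * y + a) ⁻¹' S ⊆ (fun s => (s - a) / m) '' S := by
    intro y hy
    exact ⟨m * y + a, hy, by field_simp; ring⟩
  exact measure_mono_null hsub (image_null (by fun_prop) hS)

lemma null_of_affine_preimage_null {m a : ℝ} (hm : m ≠ 0) {S : Set ℝ}
    (h : volume ((fun y => m * y + a) ⁻¹' S) = 0) : volume S = 0 := by
  have hsub : S ⊆ (fun y => m * y + a) '' ((fun y => m * y + a) ⁻¹' S) := by
    intro s hs
    refine ⟨(s - a) / m, ?_, by field_simp; ring⟩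
    simp only [mem_preimage]
    have : m * ((s - a) / m) + a = s := by field_simp; ring
    rwa [this]
  exact measure_mono_null hsub (image_null (by fun_prop) h)

lemma erealIoo_coe (a b : ℝ) : erealIoo ↑a ↑b = Ioo a b := by
  ext x
  simp [erealIoo, EReal.coe_lt_coe_iff, mem_Ioo]

lemma pi_volume_ne_zero (d : ℕ) : (volume : Measure (Fin d → ℝ)) ≠ 0 := by
  rw [← Measure.measure_univ_ne_zero, volume_pi, Measure.pi_univ]
  simp only [Real.volume_univ, Finset.prod_const, Finset.card_univ, Fintype.card_fin]
  exact pow_ne_zero d ENNReal.top_ne_zero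

lemma testFun_arctan {d' : ℕ} {m : ℝ} (hm : m ≠ 0) {g : (Fin d' → ℝ) → ℝ}
    (hg : Measurable g) :
    testFun (fun x : Fin (d' + 1) → ℝ => Real.arctan (m * x 0 + g (fun i => x i.succ))) := by
  set f : (Fin (d' + 1) → ℝ) → ℝ :=
    fun x => Real.arctan (m * x 0 + g (fun i => x i.succ)) with hfdef
  have htail : Measurable fun x : Fin (d' + 1) → ℝ => (fun i => x i.succ : Fin d' → ℝ) :=
    measurable_pi_lambda _ fun i => measurable_pi_apply i.succ
  have hf : Measurable f :=
    Real.measurable_arctan.comp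
      ((measurable_const.mul (measurable_pi_apply 0)).add (hg.comp htail))
  set e := MeasurableEquiv.piFinSuccAbove (fun _ : Fin (d' + 1) => ℝ) 0 with he
  have mp : MeasurePreserving e volume volume :=
    volume_preserving_piFinSuccAbove (fun _ : Fin (d' + 1) => ℝ) 0
  set F : ℝ × (Fin d' → ℝ) → ℝ := fun p => Real.arctan (m * p.1 + g p.2) with hF
  have hFmeas : Measurable F :=
    Real.measurable_arctan.comp
      ((measurable_const.mul measurable_fst).add (hg.comp measurable_snd))
  have he_apply : ∀ x : Fin (d' + 1) → ℝ, e x = (x 0, fun i => x i.succ) := by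
    intro x
    simp [he, MeasurableEquiv.piFinSuccAbove, Fin.removeNth, Fin.zero_succAbove]
    rfl
  have hfe : ∀ x, f x = F (e x) := by
    intro x; rw [he_apply]
  refine ⟨hf, ((-(π/2) : ℝ) : EReal), ((π/2 : ℝ) : EReal), ?_, ?_, ?_⟩
  · exact EReal.coe_lt_coe_iff.mpr (by linarith [Real.pi_pos])
  · intro x
    exact ⟨EReal.coe_lt_coe_iff.mpr (Real.neg_pi_div_two_lt_arctan _),
      EReal.coe_lt_coe_iff.mpr (Real.arctan_lt_pi_div_two _)⟩
  · intro ν hprob hreg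
    unfold regularOn
    rw [erealIoo_coe]
    have hrange : ∀ x, f x ∈ Ioo (-(π/2)) (π/2) := fun x =>
      ⟨Real.neg_pi_div_two_lt_arctan _, Real.arctan_lt_pi_div_two _⟩
    -- main Fubini identity
    have hvol1 : ∀ s : Set ℝ, MeasurableSet s →
        volume (f ⁻¹' s) = ∫⁻ z, volume ((fun y => (y, z)) ⁻¹' (F ⁻¹' s)) ∂volume := by
      intro s hs
      have h1 : f ⁻¹' s = e ⁻¹' (F ⁻¹' s) := by
        ext x; simp [mem_preimage, hfe x]
      rw [h1, mp.measure_preimage_equiv, Measure.volume_eq_prod,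
        Measure.prod_apply_symm (hFmeas hs)]
    have hslice : ∀ (s : Set ℝ) (z : Fin d' → ℝ),
        (fun y => (y, z)) ⁻¹' (F ⁻¹' s) = (fun y => m * y + g z) ⁻¹' (Real.arctan ⁻¹' s) := by
      intro s z; ext y; simp [hF, mem_preimage]
    refine ⟨?_, ?_, ?_⟩
    · rw [Measure.map_apply hf measurableSet_Ioo.compl]
      have : f ⁻¹' (Ioo (-(π/2)) (π/2))ᶜ = ∅ := by
        rw [eq_empty_iff_forall_notMem]
        intro x hx
        exact hx (hrange x)
      rw [this, measure_empty]
    · refine Measure.AbsolutelyContinuous.mk fun s hs h0 => ?_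
      rw [Measure.restrict_apply hs] at h0
      rw [Measure.map_apply hf hs]
      apply hreg.1
      have hps : f ⁻¹' s = f ⁻¹' (s ∩ Ioo (-(π/2)) (π/2)) := by
        ext x
        simp only [mem_preimage, mem_inter_iff]
        exact ⟨fun hx => ⟨hx, hrange x⟩, fun hx => hx.1⟩
      rw [hps, hvol1 _ (hs.inter measurableSet_Ioo)]
      have hz : ∀ z : Fin d' → ℝ,
          volume ((fun y => (y, z)) ⁻¹' (F ⁻¹' (s ∩ Ioo (-(π/2)) (π/2)))) = 0 := by
        intro z
        rw [hslice]
        refine affine_preimage_null hm (preimage_arctan_null ?_)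
        rwa [inter_assoc, inter_self]
      simp only [hz]
      exact lintegral_zero
    · refine Measure.AbsolutelyContinuous.mk fun s hs h0 => ?_
      rw [Measure.map_apply hf hs] at h0
      have hv : volume (f ⁻¹' s) = 0 := hreg.2 h0
      rw [hvol1 s hs] at hv
      have hmeas : Measurable fun z : Fin d' → ℝ =>
          volume ((fun y => (y, z)) ⁻¹' (F ⁻¹' s)) :=
        measurable_measure_prodMk_right (hFmeas hs)
      have hae := (lintegral_eq_zero_iff hmeas).mp hv
      have hne : (ae (volume : Measure (Fin d' → ℝ))).NeBot :=
        ae_neBot.mpr (pi_volume_ne_zero d')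
      obtain ⟨z₀, hz₀⟩ := hae.exists
      have hz₀' : volume ((fun y => (y, z₀)) ⁻¹' (F ⁻¹' s)) = 0 := hz₀
      rw [hslice] at hz₀'
      have h1 : volume (Real.arctan ⁻¹' s) = 0 := null_of_affine_preimage_null hm hz₀'
      have h2 : volume (s ∩ Ioo (-(π/2)) (π/2)) = 0 := null_of_preimage_arctan_null h1
      rwa [Measure.restrict_apply hs]

lemma piFinSuccAbove_zero_apply {d' : ℕ} (x : Fin (d' + 1) → ℝ) :
    (MeasurableEquiv.piFinSuccAbove (fun _ : Fin (d' + 1) => ℝ) 0) x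
      = (x 0, fun i => x i.succ) := by
  simp [MeasurableEquiv.piFinSuccAbove, Fin.removeNth, Fin.zero_succAbove]
  rfl

lemma hyperplane_null {d' : ℕ} (c : ℝ) :
    (volume : Measure (Fin (d' + 1) → ℝ)) {x | x 0 = c} = 0 := by
  have mp := volume_preserving_piFinSuccAbove (fun _ : Fin (d' + 1) => ℝ) 0
  have hset : {x : Fin (d' + 1) → ℝ | x 0 = c} =
      (MeasurableEquiv.piFinSuccAbove (fun _ : Fin (d' + 1) => ℝ) 0) ⁻¹' ({c} ×ˢ univ) := by
    ext x
    rw [mem_preimage, piFinSuccAbove_zero_apply]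
    simp [eq_comm]
  rw [hset, mp.measure_preimage_equiv, Measure.volume_eq_prod, Measure.prod_prod]
  simp

lemma key_eq {d' : ℕ} (μ ν : Measure (Fin (d' + 1) → ℝ))
    [IsProbabilityMeasure μ] [IsProbabilityMeasure ν]
    (hμ : regular μ) (hν : regular ν)
    (h : ∀ f : (Fin (d' + 1) → ℝ) → ℝ, testFun f → ∫ x, f x ∂μ = ∫ x, f x ∂ν)
    (c : ℝ) (B : Set (Fin d' → ℝ)) (hB : MeasurableSet B) :
    μ {x | x 0 < c ∧ (fun i => x i.succ) ∈ B} = ν {x | x 0 < c ∧ (fun i => x i.succ) ∈ B} := by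
  set S : Set (Fin (d' + 1) → ℝ) := {x | x 0 < c ∧ (fun i => x i.succ) ∈ B} with hS
  have htail : Measurable fun x : Fin (d' + 1) → ℝ => (fun i => x i.succ : Fin d' → ℝ) :=
    measurable_pi_lambda _ fun i => measurable_pi_apply i.succ
  have hSm : MeasurableSet S := by
    have : S = {x : Fin (d' + 1) → ℝ | x 0 < c} ∩
        ((fun x : Fin (d' + 1) → ℝ => (fun i => x i.succ : Fin d' → ℝ)) ⁻¹' B) := rfl
    rw [this]
    exact (measurableSet_lt (measurable_pi_apply 0) measurable_const).inter (htail hB)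
  set G : ℕ → (Fin d' → ℝ) → ℝ := fun n z =>
    ((n : ℝ) + 1) * (-c) + ((n : ℝ) + 1) ^ 2 * (Bᶜ).indicator (fun _ => (1 : ℝ)) z with hG
  set f : ℕ → (Fin (d' + 1) → ℝ) → ℝ := fun n x =>
    Real.arctan (((n : ℝ) + 1) * x 0 + G n (fun i => x i.succ)) with hf
  have hGmeas : ∀ n, Measurable (G n) := fun n =>
    measurable_const.add (measurable_const.mul
      ((measurable_const : Measurable fun _ : Fin d' → ℝ => (1 : ℝ)).indicator hB.compl))
  have htest : ∀ n, testFun (f n) := fun n =>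
    testFun_arctan (by positivity) (hGmeas n)
  have hint : ∀ n, ∫ x, f n x ∂μ = ∫ x, f n x ∂ν := fun n => h (f n) (htest n)
  -- pointwise limits
  have hN : Tendsto (fun n : ℕ => ((n : ℝ) + 1)) atTop atTop :=
    tendsto_atTop_add_const_right _ 1 tendsto_natCast_atTop_atTop
  have hlim : ∀ x : Fin (d' + 1) → ℝ, x 0 ≠ c →
      Tendsto (fun n : ℕ => f n x) atTop
        (𝓝 (π / 2 - π * S.indicator (fun _ => (1 : ℝ)) x)) := by
    intro x hx
    by_cases hzB : (fun i => x i.succ) ∈ B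
    · have harg : ∀ n : ℕ, f n x = Real.arctan (((n : ℝ) + 1) * (x 0 - c)) := by
        intro n
        simp only [hf, hG, Set.indicator_of_notMem (Set.notMem_compl_iff.mpr hzB)]
        exact congrArg Real.arctan (by ring)
      rw [show (fun n : ℕ => f n x) = fun n : ℕ => Real.arctan (((n : ℝ) + 1) * (x 0 - c))
        from funext harg]
      rcases lt_or_gt_of_ne hx with hlt | hgt
      · have hxS : x ∈ S := ⟨hlt, hzB⟩
        have hval : π / 2 - π * S.indicator (fun _ => (1 : ℝ)) x = -(π / 2) := by
          rw [indicator_of_mem hxS]; ring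
        rw [hval]
        have h1 : Tendsto (fun n : ℕ => ((n : ℝ) + 1) * (x 0 - c)) atTop atBot :=
          hN.atTop_mul_const_of_neg (by linarith)
        exact (tendsto_nhds_of_tendsto_nhdsWithin Real.tendsto_arctan_atBot).comp h1
      · have hxS : x ∉ S := fun hmem => absurd hmem.1 (not_lt_of_gt hgt)
        have hval : π / 2 - π * S.indicator (fun _ => (1 : ℝ)) x = π / 2 := by
          rw [indicator_of_notMem hxS]; ring
        rw [hval]
        have h1 : Tendsto (fun n : ℕ => ((n : ℝ) + 1) * (x 0 - c)) atTop atTop :=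
          hN.atTop_mul_const (by linarith)
        exact (tendsto_nhds_of_tendsto_nhdsWithin Real.tendsto_arctan_atTop).comp h1
    · have harg : ∀ n : ℕ, f n x =
          Real.arctan (((n : ℝ) + 1) * ((x 0 - c) + ((n : ℝ) + 1))) := by
        intro n
        simp only [hf, hG, Set.indicator_of_mem (Set.mem_compl hzB)]
        exact congrArg Real.arctan (by ring)
      rw [show (fun n : ℕ => f n x)
          = fun n : ℕ => Real.arctan (((n : ℝ) + 1) * ((x 0 - c) + ((n : ℝ) + 1)))
        from funext harg]
      have hxS : x ∉ S := fun hmem => hzB hmem.2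
      have hval : π / 2 - π * S.indicator (fun _ => (1 : ℝ)) x = π / 2 := by
        rw [indicator_of_notMem hxS]; ring
      rw [hval]
      have h1 : Tendsto (fun n : ℕ => ((n : ℝ) + 1) * ((x 0 - c) + ((n : ℝ) + 1)))
          atTop atTop :=
        hN.atTop_mul_atTop₀ (tendsto_atTop_add_const_left _ _ hN)
      exact (tendsto_nhds_of_tendsto_nhdsWithin Real.tendsto_arctan_atTop).comp h1
  have hbd : ∀ y : ℝ, |Real.arctan y| ≤ π / 2 := fun y =>
    abs_le.mpr ⟨(Real.neg_pi_div_two_lt_arctan y).le, (Real.arctan_lt_pi_div_two y).le⟩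
  -- dominated convergence for a probability measure ρ
  have main : ∀ (ρ : Measure (Fin (d' + 1) → ℝ)), IsProbabilityMeasure ρ → regular ρ →
      Tendsto (fun n => ∫ x, f n x ∂ρ) atTop (𝓝 (π / 2 - π * (ρ S).toReal)) := by
    intro ρ hρprob hρreg
    have hae : ∀ᵐ x ∂ρ, x 0 ≠ c := by
      rw [ae_iff]
      have hseteq : {a : Fin (d' + 1) → ℝ | ¬ a 0 ≠ c} = {x : Fin (d' + 1) → ℝ | x 0 = c} := by
        ext a; simp
      rw [hseteq]
      exact hρreg.1 (hyperplane_null c)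
    have hIlim : ∫ x, (π / 2 - π * S.indicator (fun _ => (1 : ℝ)) x) ∂ρ
        = π / 2 - π * (ρ S).toReal := by
      have hint1 : Integrable (S.indicator fun _ => (1 : ℝ)) ρ :=
        (integrable_indicator_iff hSm).mpr
          (integrableOn_const (measure_ne_top ρ S))
      rw [integral_sub (integrable_const _) (hint1.const_mul π), integral_const_mul _ _,
        integral_indicator_const _ hSm, integral_const]
      simp [measure_univ, Measure.real]
    have := tendsto_integral_of_dominated_convergence (μ := ρ)
      (F := fun n x => f n x) (f := fun x => π / 2 - π * S.indicator (fun _ => (1 : ℝ)) x)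
      (bound := fun _ => π / 2)
      (fun n => ((htest n).1).aestronglyMeasurable)
      (integrable_const _)
      (fun n => ae_of_all _ fun x => by
        simpa [Real.norm_eq_abs] using hbd (((n : ℝ) + 1) * x 0 + G n (fun i => x i.succ)))
      (by filter_upwards [hae] with x hx using hlim x hx)
    rwa [hIlim] at this
  have h1 := main μ inferInstance hμ
  have h2 := main ν inferInstance hν
  rw [show (fun n => ∫ x, f n x ∂μ) = fun n => ∫ x, f n x ∂ν from funext hint] at h1
  have heq := tendsto_nhds_unique h1 h2
  have heq2 : (ν S).toReal = (μ S).toReal :=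
    mul_left_cancel₀ Real.pi_ne_zero (by linarith)
  exact ((ENNReal.toReal_eq_toReal_iff' (measure_ne_top ν S) (measure_ne_top μ S)).mp heq2).symm

end auxlemmas

section auxlemmas2
open Real Filter Topology MeasurableSpace

/-- Regular distributions are characterised by the test functions F_d: if two regular
probability measures on ℝ^d agree on the integral of every test function, they are equal. -/
theorem stmt_3 {d : ℕ} (μ ν : Measure (Fin d → ℝ))
    [IsProbabilityMeasure μ] [IsProbabilityMeasure ν]
    (hμ : regular μ) (hν : regular ν)
    (h : ∀ f : (Fin d → ℝ) → ℝ, testFun f → ∫ x, f x ∂μ = ∫ x, f x ∂ν) :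
    μ = ν := by
  cases d with
  | zero =>
    ext s _
    rcases eq_empty_or_nonempty s with rfl | ⟨x, hx⟩
    · simp
    · have hsu : s = univ := eq_univ_of_forall fun y => by
        have hyx : y = x := Subsingleton.elim y x
        rwa [hyx]
      rw [hsu, measure_univ, measure_univ]
  | succ d' =>
    have key := key_eq μ ν hμ hν h
    set e := MeasurableEquiv.piFinSuccAbove (fun _ : Fin (d' + 1) => ℝ) 0 with he
    have hmap : μ.map e = ν.map e := by
      have hp1 : IsProbabilityMeasure (μ.map e) :=
        Measure.isProbabilityMeasure_map e.measurable.aemeasurable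
      have hp2 : IsProbabilityMeasure (ν.map e) :=
        Measure.isProbabilityMeasure_map e.measurable.aemeasurable
      refine ext_of_generate_finite
        (image2 (· ×ˢ ·) (range (Iio : ℝ → Set ℝ)) {t : Set (Fin d' → ℝ) | MeasurableSet t})
        ?_ ?_ ?_ ?_
      · have h1 : (inferInstance : MeasurableSpace ℝ)
            = MeasurableSpace.generateFrom (range (Iio : ℝ → Set ℝ)) := by
          rw [BorelSpace.measurable_eq (α := ℝ), borel_eq_generateFrom_Iio]
        have h2 : (inferInstance : MeasurableSpace (Fin d' → ℝ))
            = MeasurableSpace.generateFrom {t : Set (Fin d' → ℝ) | MeasurableSet t} :=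
          generateFrom_measurableSet.symm
        have hspan : IsCountablySpanning (range (Iio : ℝ → Set ℝ)) := by
          refine ⟨fun n => Iio (n : ℝ), fun n => mem_range_self _, ?_⟩
          ext x
          simp only [mem_iUnion, mem_Iio, mem_univ, iff_true]
          exact exists_nat_gt x
        calc (inferInstance : MeasurableSpace (ℝ × (Fin d' → ℝ)))
            = @Prod.instMeasurableSpace _ _
                (MeasurableSpace.generateFrom (range (Iio : ℝ → Set ℝ)))
                (MeasurableSpace.generateFrom {t : Set (Fin d' → ℝ) | MeasurableSet t}) := by
              rw [← h1, ← h2]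
          _ = _ := generateFrom_prod_eq hspan isCountablySpanning_measurableSet
      · rintro s ⟨I1, ⟨c1, rfl⟩, B1, hB1, rfl⟩ t ⟨I2, ⟨c2, rfl⟩, B2, hB2, rfl⟩ -
        refine ⟨Iio (min c1 c2), ⟨min c1 c2, rfl⟩, B1 ∩ B2, (show MeasurableSet (B1 ∩ B2) from MeasurableSet.inter hB1 hB2), ?_⟩
        rw [prod_inter_prod, Iio_inter_Iio]
      · rintro s ⟨I1, ⟨c1, rfl⟩, B1, hB1, rfl⟩
        rw [Measure.map_apply e.measurable (measurableSet_Iio.prod (show MeasurableSet B1 from hB1)),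
          Measure.map_apply e.measurable (measurableSet_Iio.prod (show MeasurableSet B1 from hB1))]
        have hpre : e ⁻¹' (Iio c1 ×ˢ B1) = {x | x 0 < c1 ∧ (fun i => x i.succ) ∈ B1} := by
          ext x
          rw [mem_preimage, he, piFinSuccAbove_zero_apply]
          simp [Set.mem_prod]
        rw [hpre]
        exact key c1 B1 hB1
      · rw [measure_univ, measure_univ]
    have := congrArg (fun ρ : Measure (ℝ × (Fin d' → ℝ)) => ρ.map e.symm) hmap
    simpa [MeasurableEquiv.map_symm_map] using this

end auxlemmas2
end

section
/- For every x* ∈ ℝ^d and every c > 0, the function f(θ) := ∏_{i=1}^d (1 + exp(2c(θ_i − x*_i)))^{-1} is a measurable map from ℝ^d into the open interval (0,1), and for every regular probability measure ν on ℝ^d the pushforward measure f_#ν is regular on (0,1); that is, f belongs to the set of test functions F_d. -/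
open MeasureTheory Set

open Filter Topology

theorem oneD {c a P : ℝ} (hc : 0 < c) (hP : 0 < P) {N : Set ℝ} (hN : MeasurableSet N) :
    volume ((fun t => P * (1 + Real.exp (2*c*(t-a)))⁻¹) ⁻¹' N) = 0 ↔
      volume (N ∩ Ioo 0 P) = 0 := by
  set h : ℝ → ℝ := fun t => P * (1 + Real.exp (2*c*(t-a)))⁻¹ with hh
  set D : ℝ → ℝ := fun t => P * (-(Real.exp (2*c*(t-a)) * (2*c*1)) / (1 + Real.exp (2*c*(t-a)))^2)
    with hD
  have epos : ∀ t : ℝ, (0:ℝ) < 1 + Real.exp (2*c*(t-a)) := fun t => by positivity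
  have hd : ∀ t, HasDerivAt h (D t) t := by
    intro t
    have h1 : HasDerivAt (fun t : ℝ => 2*c*(t-a)) (2*c*1) t :=
      ((hasDerivAt_id t).sub_const a).const_mul (2*c)
    exact ((h1.exp.const_add 1).inv (by positivity)).const_mul P
  have hDpos : ∀ t, 0 < |D t| := by
    intro t
    rw [abs_pos]
    refine ne_of_lt (mul_neg_of_pos_of_neg hP (div_neg_of_neg_of_pos ?_ (by positivity)))
    have := Real.exp_pos (2*c*(t-a))
    nlinarith
  have hanti : StrictAnti h := by
    intro s t hst
    have : Real.exp (2*c*(s-a)) < Real.exp (2*c*(t-a)) := by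
      apply Real.exp_lt_exp.mpr; nlinarith
    have h2 : (1 + Real.exp (2*c*(t-a)))⁻¹ < (1 + Real.exp (2*c*(s-a)))⁻¹ := by
      apply inv_strictAnti₀ (epos s); linarith
    exact mul_lt_mul_of_pos_left h2 hP
  have hmeas : Measurable h := by fun_prop
  have hrange : range h = Ioo 0 P := by
    apply Subset.antisymm
    · rintro x ⟨t, rfl⟩
      constructor
      · have := epos t; positivity
      · have h1 : (1 + Real.exp (2*c*(t-a)))⁻¹ < 1 :=
          inv_lt_one_of_one_lt₀ (by have := Real.exp_pos (2*c*(t-a)); linarith)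
        calc h t < P * 1 := mul_lt_mul_of_pos_left h1 hP
        _ = P := mul_one P
    · rintro x ⟨hx0, hxP⟩
      refine ⟨a + (2*c)⁻¹ * Real.log (P/x - 1), ?_⟩
      have hq : 0 < P/x - 1 := by
        have : 1 < P/x := (one_lt_div hx0).mpr hxP
        linarith
      have harg : 2*c*((a + (2*c)⁻¹ * Real.log (P/x - 1)) - a) = Real.log (P/x - 1) := by
        field_simp
        ring
      rw [hh]
      simp only [harg, Real.exp_log hq]
      field_simp
      ring
  have key : Measure.map h (volume.withDensity fun t => ENNReal.ofReal |D t|) =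
      volume.restrict (Ioo 0 P) := by
    have := map_withDensity_abs_det_fderiv_eq_addHaar (volume : Measure ℝ) (s := (univ : Set ℝ)) MeasurableSet.univ
      (f' := fun t => (1 : ℝ →L[ℝ] ℝ).smulRight (D t))
      (fun t _ => ((hd t).hasFDerivAt).hasFDerivWithinAt)
      (hanti.injective.injOn)
    simpa [ContinuousLinearMap.smulRight_one_eq_toSpanSingleton, ContinuousLinearMap.det_toSpanSingleton, image_univ, hrange] using this
  have hwmeas : Measurable fun t => ENNReal.ofReal |D t| := by fun_prop
  have step1 : volume (h ⁻¹' N) = 0 ↔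
      (volume.withDensity fun t => ENNReal.ofReal |D t|) (h ⁻¹' N) = 0 := by
    rw [withDensity_apply_eq_zero hwmeas]
    have : {t : ℝ | ENNReal.ofReal |D t| ≠ 0} = univ := by
      ext t
      simp only [ne_eq, ENNReal.ofReal_eq_zero, not_le, mem_setOf_eq, mem_univ, iff_true]
      exact hDpos t
    rw [this, univ_inter]
  rw [step1, ← Measure.map_apply hmeas hN, key, Measure.restrict_apply hN]

theorem preimage_null_iff {n : ℕ} (xstar : Fin (n+1) → ℝ) {c : ℝ} (hc : 0 < c)
    {S : Set ℝ} (hS : MeasurableSet S) :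
    volume ((fun θ : Fin (n+1) → ℝ =>
        ∏ i, (1 + Real.exp (2 * c * (θ i - xstar i)))⁻¹) ⁻¹' S) = 0 ↔
      volume (S ∩ Ioo 0 1) = 0 := by
  set f : (Fin (n+1) → ℝ) → ℝ :=
    fun θ => ∏ i, (1 + Real.exp (2 * c * (θ i - xstar i)))⁻¹ with hf_def
  have hf : Measurable f := Finset.measurable_prod _ (fun i _ => by fun_prop)
  set P : (Fin n → ℝ) → ℝ :=
    fun y => ∏ i, (1 + Real.exp (2 * c * (y i - xstar i.succ)))⁻¹ with hP_def
  have hP0 : ∀ y, 0 < P y := fun y => Finset.prod_pos (fun i _ => by positivity)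
  have hP1 : ∀ y, P y ≤ 1 := by
    intro y
    apply Finset.prod_le_one
    · intro i _; positivity
    · intro i _
      exact le_of_lt (inv_lt_one_of_one_lt₀
        (by linarith [Real.exp_pos (2*c*(y i - xstar i.succ))]))
  have hPcont : Continuous P := by
    apply continuous_finset_prod
    intro i _
    apply Continuous.inv₀
    · fun_prop
    · intro y
      positivity
  set g : ℝ × (Fin n → ℝ) → ℝ :=
    fun p => P p.2 * (1 + Real.exp (2 * c * (p.1 - xstar 0)))⁻¹ with hg_def
  have hg : Measurable g := by
    apply Measurable.mul
    · exact hPcont.measurable.comp measurable_snd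
    · fun_prop
  set e := MeasurableEquiv.piFinSuccAbove (fun _ : Fin (n+1) => ℝ) 0 with he_def
  have hcomp : ∀ (p : ℝ × (Fin n → ℝ)), f (e.symm p) = g p := by
    rintro ⟨t, y⟩
    have hsymm : e.symm (t, y) = Fin.cons t y := by
      simp [he_def, MeasurableEquiv.piFinSuccAbove, Fin.insertNthEquiv, Fin.insertNth_zero']
    rw [hsymm, hf_def]
    simp only [Fin.prod_univ_succ, Fin.cons_zero, Fin.cons_succ]
    rw [mul_comm]
  have hpre : e.symm ⁻¹' (f ⁻¹' S) = g ⁻¹' S := by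
    ext p
    simp [mem_preimage, hcomp p]
  have mp := (volume_preserving_piFinSuccAbove (fun _ : Fin (n+1) => ℝ) 0).symm
  have key0 : volume (f ⁻¹' S) =
      ∫⁻ y, volume ((fun t => (t, y)) ⁻¹' (g ⁻¹' S)) := by
    rw [← mp.measure_preimage (hf hS).nullMeasurableSet, hpre, Measure.volume_eq_prod,
      Measure.prod_apply_symm (hg hS)]
  have hslice : ∀ y, ((fun t => (t, y)) ⁻¹' (g ⁻¹' S)) =
      (fun t => P y * (1 + Real.exp (2 * c * (t - xstar 0)))⁻¹) ⁻¹' S := fun y => rfl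
  constructor
  · -- preimage null → S ∩ Ioo 0 1 null
    intro h0
    rw [key0] at h0
    have hmeas : Measurable fun y => volume ((fun t => (t, y)) ⁻¹' (g ⁻¹' S)) :=
      measurable_measure_prodMk_right (hg hS)
    have hae : ∀ᵐ y : Fin n → ℝ, volume ((fun t => (t, y)) ⁻¹' (g ⁻¹' S)) = 0 := by
      have := (lintegral_eq_zero_iff hmeas).mp h0
      filter_upwards [this] with y hy
      simpa using hy
    -- for each k, find good y with P y close to 1
    have hpick : ∀ k : ℕ, ∃ y : Fin n → ℝ,
        (1 : ℝ) - 1/(k+1) < P y ∧ volume ((fun t => (t, y)) ⁻¹' (g ⁻¹' S)) = 0 := by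
      intro k
      set U : Set (Fin n → ℝ) := {y | (1:ℝ) - 1/(k+1) < P y} with hU_def
      have hUopen : IsOpen U := isOpen_lt continuous_const hPcont
      have hUne : U.Nonempty := by
        have h1 : Tendsto (fun M : ℝ => Real.exp (-(2*c*M))) atTop (nhds 0) := by
          apply Real.tendsto_exp_atBot.comp
          have hmul : Tendsto (fun M : ℝ => 2*c*M) atTop atTop :=
            Tendsto.const_mul_atTop (by positivity : (0:ℝ) < 2*c) tendsto_id
          exact tendsto_neg_atTop_atBot.comp hmul
        have h2 : Tendsto (fun M : ℝ => ((1 + Real.exp (-(2*c*M)))⁻¹)^n) atTop (nhds 1) := by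
          have h3 : Tendsto (fun M : ℝ => (1 + Real.exp (-(2*c*M)))⁻¹) atTop (nhds 1) := by
            have := (tendsto_const_nhds.add h1).inv₀ (by norm_num : (1:ℝ) + 0 ≠ 0)
            simpa using this
          simpa using h3.pow n
        have hlt : (1:ℝ) - 1/(k+1) < 1 := by
          have : (0:ℝ) < 1/(k+1) := by positivity
          linarith
        obtain ⟨M, hM⟩ := (h2.eventually (eventually_gt_nhds hlt)).exists
        refine ⟨fun i => xstar i.succ - M, ?_⟩
        have hPy : P (fun i => xstar i.succ - M) = ((1 + Real.exp (-(2*c*M)))⁻¹)^n := by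
          have hfac : ∀ i : Fin n,
              (1 + Real.exp (2*c*((xstar i.succ - M) - xstar i.succ)))⁻¹
                = (1 + Real.exp (-(2*c*M)))⁻¹ := by
            intro i
            have harg : 2*c*((xstar i.succ - M) - xstar i.succ) = -(2*c*M) := by ring
            rw [harg]
          rw [hP_def]
          simp only [hfac, Finset.prod_const, Finset.card_univ, Fintype.card_fin]
        rw [hU_def, mem_setOf_eq, hPy]
        exact hM
      have hUpos : volume U ≠ 0 := (hUopen.measure_pos volume hUne).ne'
      by_contra hcon
      push_neg at hcon
      have hsub : U ⊆ {y | ¬ volume ((fun t => (t, y)) ⁻¹' (g ⁻¹' S)) = 0} := by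
        intro y hy
        exact hcon y hy
      exact hUpos (measure_mono_null hsub hae)
    choose yk hyk1 hyk2 using hpick
    have Sk : ∀ k, volume (S ∩ Ioo 0 (P (yk k))) = 0 := by
      intro k
      refine (oneD (a := xstar 0) hc (hP0 (yk k)) hS).mp ?_
      rw [← hslice (yk k)]
      exact hyk2 k
    have hcover : S ∩ Ioo 0 1 ⊆ ⋃ k : ℕ, S ∩ Ioo 0 (P (yk k)) := by
      rintro x ⟨hxS, hx0, hx1⟩
      obtain ⟨k, hk⟩ := exists_nat_one_div_lt (show (0:ℝ) < 1 - x by linarith)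
      refine mem_iUnion.mpr ⟨k, hxS, hx0, ?_⟩
      have := hyk1 k
      linarith
    exact measure_mono_null hcover (measure_iUnion_null Sk)
  · -- S ∩ Ioo 0 1 null → preimage null
    intro h1
    rw [key0]
    have : ∀ y : Fin n → ℝ, volume ((fun t => (t, y)) ⁻¹' (g ⁻¹' S)) = 0 := by
      intro y
      rw [hslice y]
      refine (oneD (a := xstar 0) hc (hP0 y) hS).mpr ?_
      refine measure_mono_null ?_ h1
      exact inter_subset_inter_right S (Ioo_subset_Ioo_right (hP1 y))
    simp only [this, lintegral_zero]

/-- For every x* ∈ ℝ^d and c > 0, the function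
f(θ) = ∏_i (1 + exp(2c(θ_i − x*_i)))⁻¹ is measurable, takes values in (0,1), pushes
every regular probability measure forward to a measure regular on (0,1), and hence is
a test function in F_d. -/
theorem stmt_4 {d : ℕ} (hd : 0 < d) (xstar : Fin d → ℝ) (c : ℝ) (hc : 0 < c) :
    Measurable (fun θ : Fin d → ℝ => ∏ i, (1 + Real.exp (2 * c * (θ i - xstar i)))⁻¹) ∧
    (∀ θ : Fin d → ℝ,
      (∏ i, (1 + Real.exp (2 * c * (θ i - xstar i)))⁻¹) ∈ Ioo (0:ℝ) 1) ∧
    (∀ ν : Measure (Fin d → ℝ), IsProbabilityMeasure ν → regular ν →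
      regularOn (ν.map (fun θ => ∏ i, (1 + Real.exp (2 * c * (θ i - xstar i)))⁻¹))
        (0 : EReal) (1 : EReal)) ∧
    testFun (fun θ : Fin d → ℝ => ∏ i, (1 + Real.exp (2 * c * (θ i - xstar i)))⁻¹) := by
  obtain ⟨n, rfl⟩ : ∃ n, d = n + 1 := ⟨d - 1, (Nat.succ_pred_eq_of_pos hd).symm⟩
  set f : (Fin (n+1) → ℝ) → ℝ :=
    fun θ => ∏ i, (1 + Real.exp (2 * c * (θ i - xstar i)))⁻¹ with hf_def
  have hf : Measurable f := Finset.measurable_prod _ (fun i _ => by fun_prop)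
  have hmem : ∀ θ, f θ ∈ Ioo (0:ℝ) 1 := by
    intro θ
    constructor
    · exact Finset.prod_pos (fun i _ => by positivity)
    · rw [hf_def]
      simp only
      rw [Fin.prod_univ_succ]
      have h0 : (1 + Real.exp (2*c*(θ 0 - xstar 0)))⁻¹ < 1 :=
        inv_lt_one_of_one_lt₀ (by linarith [Real.exp_pos (2*c*(θ 0 - xstar 0))])
      have htail : (∏ i : Fin n, (1 + Real.exp (2*c*(θ i.succ - xstar i.succ)))⁻¹) ≤ 1 :=
        Finset.prod_le_one (fun i _ => by positivity)
          (fun i _ => le_of_lt (inv_lt_one_of_one_lt₀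
            (by linarith [Real.exp_pos (2*c*(θ i.succ - xstar i.succ))])))
      calc (1 + Real.exp (2*c*(θ 0 - xstar 0)))⁻¹ *
            ∏ i : Fin n, (1 + Real.exp (2*c*(θ i.succ - xstar i.succ)))⁻¹
          ≤ (1 + Real.exp (2*c*(θ 0 - xstar 0)))⁻¹ * 1 :=
            mul_le_mul_of_nonneg_left htail (by positivity)
        _ = (1 + Real.exp (2*c*(θ 0 - xstar 0)))⁻¹ := mul_one _
        _ < 1 := h0
  have hIoo : erealIoo 0 1 = Ioo (0:ℝ) 1 := by
    ext x
    simp only [erealIoo, mem_setOf_eq, mem_Ioo]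
    constructor
    · rintro ⟨h1, h2⟩
      exact ⟨by exact_mod_cast h1, by exact_mod_cast h2⟩
    · rintro ⟨h1, h2⟩
      exact ⟨by exact_mod_cast h1, by exact_mod_cast h2⟩
  have hreg : ∀ ν : Measure (Fin (n+1) → ℝ), IsProbabilityMeasure ν → regular ν →
      regularOn (ν.map f) (0 : EReal) (1 : EReal) := by
    intro ν hprob hν
    rw [regularOn, hIoo]
    refine ⟨?_, ?_, ?_⟩
    · rw [Measure.map_apply hf measurableSet_Ioo.compl]
      have hempty : f ⁻¹' (Ioo (0:ℝ) 1)ᶜ = ∅ := by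
        ext θ
        simp only [mem_preimage, mem_compl_iff, mem_empty_iff_false, iff_false, not_not]
        exact hmem θ
      rw [hempty, measure_empty]
    · intro s hs
      rw [Measure.restrict_apply' measurableSet_Ioo] at hs
      set M := toMeasurable volume (s ∩ Ioo (0:ℝ) 1) with hM_def
      have hM0 : volume M = 0 := by
        rw [hM_def, measure_toMeasurable]; exact hs
      have hMmeas : MeasurableSet M := measurableSet_toMeasurable _ _
      have hsub : s ⊆ M ∪ (Ioo (0:ℝ) 1)ᶜ := by
        intro x hx
        by_cases hxI : x ∈ Ioo (0:ℝ) 1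
        · exact Or.inl (subset_toMeasurable _ _ ⟨hx, hxI⟩)
        · exact Or.inr hxI
      apply measure_mono_null hsub
      rw [Measure.map_apply hf (hMmeas.union measurableSet_Ioo.compl)]
      have hpre : f ⁻¹' (M ∪ (Ioo (0:ℝ) 1)ᶜ) = f ⁻¹' M := by
        ext θ
        simp only [mem_preimage, mem_union, mem_compl_iff]
        constructor
        · rintro (h | h)
          · exact h
          · exact absurd (hmem θ) h
        · exact Or.inl
      rw [hpre]
      apply hν.1
      exact (preimage_null_iff xstar hc hMmeas).mpr
        (measure_mono_null inter_subset_left hM0)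
    · intro s hs
      set T := toMeasurable (ν.map f) s with hT_def
      have hT0 : (ν.map f) T = 0 := by
        rw [hT_def, measure_toMeasurable]; exact hs
      have hTmeas : MeasurableSet T := measurableSet_toMeasurable _ _
      rw [Measure.map_apply hf hTmeas] at hT0
      have hvol : volume (f ⁻¹' T) = 0 := hν.2 hT0
      have hTnull : volume (T ∩ Ioo (0:ℝ) 1) = 0 :=
        (preimage_null_iff xstar hc hTmeas).mp hvol
      rw [Measure.restrict_apply' measurableSet_Ioo]
      exact measure_mono_null
        (inter_subset_inter_left _ (subset_toMeasurable _ _)) hTnull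
  refine ⟨hf, hmem, hreg, hf, 0, 1, ?_, ?_, hreg⟩
  · exact_mod_cast (zero_lt_one : (0:ℝ) < 1)
  · intro x
    exact ⟨by exact_mod_cast (hmem x).1, by exact_mod_cast (hmem x).2⟩
end

section
/- Let μ and ν be regular probability measures on ℝ^d. Suppose that for every x* ∈ ℝ^d and every c > 0 one has ∫ f_{x*,c} dμ = ∫ f_{x*,c} dν, where f_{x*,c}(θ) := ∏_{i=1}^d (1 + exp(2c(θ_i − x*_i)))^{-1}. Then μ = ν. -/
open MeasureTheory Set Filter Topology

/-- One sigmoidal factor tends to 1 or 0 depending on sign of `t`. -/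
lemma sigmoid_factor_tendsto {t : ℝ} (ht : t ≠ 0) :
    Tendsto (fun n : ℕ => (1 + Real.exp (2 * ((n : ℝ) + 1) * t))⁻¹) atTop
      (𝓝 (if t < 0 then 1 else 0)) := by
  rcases lt_or_gt_of_ne ht with hlt | hgt
  · rw [if_pos hlt]
    have h1 : Tendsto (fun n : ℕ => 2 * ((n : ℝ) + 1) * t) atTop atBot := by
      have : Tendsto (fun n : ℕ => 2 * ((n : ℝ) + 1)) atTop atTop := by
        apply Tendsto.const_mul_atTop (by norm_num)
        exact tendsto_atTop_add_const_right _ 1 tendsto_natCast_atTop_atTop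
      exact this.atTop_mul_const_of_neg hlt
    have h2 : Tendsto (fun n : ℕ => Real.exp (2 * ((n : ℝ) + 1) * t)) atTop (𝓝 0) :=
      Real.tendsto_exp_atBot.comp h1
    have h3 : Tendsto (fun n : ℕ => 1 + Real.exp (2 * ((n : ℝ) + 1) * t)) atTop (𝓝 1) := by
      simpa using tendsto_const_nhds.add h2
    simpa using h3.inv₀ (by norm_num)
  · rw [if_neg (not_lt.mpr hgt.le)]
    have h1 : Tendsto (fun n : ℕ => 2 * ((n : ℝ) + 1) * t) atTop atTop := by
      have : Tendsto (fun n : ℕ => 2 * ((n : ℝ) + 1)) atTop atTop := by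
        apply Tendsto.const_mul_atTop (by norm_num)
        exact tendsto_atTop_add_const_right _ 1 tendsto_natCast_atTop_atTop
      exact this.atTop_mul_const hgt
    have h2 : Tendsto (fun n : ℕ => 1 + Real.exp (2 * ((n : ℝ) + 1) * t)) atTop atTop :=
      tendsto_atTop_add_const_left _ 1 (Real.tendsto_exp_atTop.comp h1)
    exact tendsto_inv_atTop_zero.comp h2

/-- For a probability measure absolutely continuous w.r.t. Lebesgue, the integrals of the
sigmoidal test functions converge to the measure of the lower box. -/
lemma tendsto_integral_sigmoid {d : ℕ} (ρ : Measure (Fin d → ℝ))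
    [IsProbabilityMeasure ρ] (hρ : ρ ≪ volume) (x : Fin d → ℝ) :
    Tendsto (fun n : ℕ => ∫ θ, ∏ i, (1 + Real.exp (2 * ((n : ℝ) + 1) * (θ i - x i)))⁻¹ ∂ρ)
      atTop (𝓝 ((ρ (Set.pi univ fun i => Iio (x i))).toReal)) := by
  set s : Set (Fin d → ℝ) := Set.pi univ fun i => Iio (x i) with hs
  have hsm : MeasurableSet s := MeasurableSet.univ_pi fun i => measurableSet_Iio
  have hpos : ∀ (a : ℝ), (0 : ℝ) ≤ (1 + Real.exp a)⁻¹ := fun a =>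
    inv_nonneg.mpr (by positivity)
  have hle : ∀ (a : ℝ), (1 + Real.exp a)⁻¹ ≤ 1 := fun a => by
    rw [inv_le_one_iff₀]; right; nlinarith [Real.exp_pos a]
  have hint : ∫ θ, s.indicator (fun _ => (1 : ℝ)) θ ∂ρ = (ρ s).toReal := by
    rw [integral_indicator_const _ hsm]; simp; rfl
  rw [← hint]
  apply tendsto_integral_of_dominated_convergence (bound := fun _ => (1 : ℝ))
  · intro n
    apply Measurable.aestronglyMeasurable
    exact Finset.measurable_prod _ fun i _ =>
      (((measurable_pi_apply i).sub measurable_const).const_mul _).exp.const_add 1 |>.inv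
  · exact integrable_const 1
  · intro n
    filter_upwards with θ
    rw [Real.norm_eq_abs, abs_of_nonneg (Finset.prod_nonneg fun i _ => hpos _)]
    exact Finset.prod_le_one (fun i _ => hpos _) (fun i _ => hle _)
  · -- a.e. pointwise convergence
    have hnull : ρ (⋃ i, { θ : Fin d → ℝ | θ i = x i }) = 0 := by
      apply hρ
      apply measure_iUnion_null
      intro i
      have : (volume : Measure (Fin d → ℝ)) = Measure.pi fun _ => volume := volume_pi
      rw [this]
      exact MeasureTheory.Measure.pi_hyperplane (fun _ => (volume : Measure ℝ)) i (x i)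
    filter_upwards [compl_mem_ae_iff.mpr hnull] with θ hθ
    simp only [compl_iUnion, mem_iInter, mem_compl_iff, mem_setOf_eq] at hθ
    have hfac : ∀ i, Tendsto (fun n : ℕ => (1 + Real.exp (2 * ((n : ℝ) + 1) * (θ i - x i)))⁻¹)
        atTop (𝓝 (if θ i - x i < 0 then 1 else 0)) :=
      fun i => sigmoid_factor_tendsto (sub_ne_zero.mpr (hθ i))
    have hprod := tendsto_finset_prod (Finset.univ : Finset (Fin d))
      (fun i _ => hfac i)
    convert hprod using 2
    by_cases hmem : θ ∈ s
    · have : ∀ i, θ i - x i < 0 := fun i => sub_neg.mpr (hmem i (mem_univ i))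
      simp [indicator_of_mem hmem, this]
    · rw [indicator_of_notMem hmem]
      rw [hs, mem_univ_pi] at hmem
      push_neg at hmem
      obtain ⟨i, hi⟩ := hmem
      have : ¬ (θ i - x i < 0) := by
        simp only [mem_Iio] at hi
        simpa [sub_neg] using hi
      exact (Finset.prod_eq_zero (Finset.mem_univ i) (by simp [this])).symm

/-- If two regular probability measures on ℝ^d agree on the integrals of all the sigmoidal
product test functions f_{x*,c}(θ) = ∏_i (1 + exp(2c(θ_i − x*_i)))⁻¹, then they are equal. -/
theorem stmt_5 {d : ℕ} (μ ν : Measure (Fin d → ℝ))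
    [IsProbabilityMeasure μ] [IsProbabilityMeasure ν]
    (hμ : regular μ) (hν : regular ν)
    (h : ∀ (xstar : Fin d → ℝ) (c : ℝ), 0 < c →
      ∫ θ, ∏ i, (1 + Real.exp (2 * c * (θ i - xstar i)))⁻¹ ∂μ =
      ∫ θ, ∏ i, (1 + Real.exp (2 * c * (θ i - xstar i)))⁻¹ ∂ν) :
    μ = ν := by
  have key : ∀ x : Fin d → ℝ,
      μ (Set.pi univ fun i => Iio (x i)) = ν (Set.pi univ fun i => Iio (x i)) := by
    intro x
    have h1 := tendsto_integral_sigmoid μ hμ.1 x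
    have h2 := tendsto_integral_sigmoid ν hν.1 x
    have heq : (fun n : ℕ => ∫ θ, ∏ i, (1 + Real.exp (2 * ((n : ℝ) + 1) * (θ i - x i)))⁻¹ ∂μ)
        = fun n : ℕ => ∫ θ, ∏ i, (1 + Real.exp (2 * ((n : ℝ) + 1) * (θ i - x i)))⁻¹ ∂ν := by
      funext n
      exact h x ((n : ℝ) + 1) (by positivity)
    rw [heq] at h1
    have := tendsto_nhds_unique h1 h2
    exact ENNReal.toReal_eq_toReal_iff' (measure_ne_top μ _) (measure_ne_top ν _) |>.mp this
  -- conclude via π-system of lower boxes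
  have hspan : ∀ _i : Fin d, IsCountablySpanning (range (Iio : ℝ → Set ℝ)) := by
    intro _
    refine ⟨fun n => Iio (n : ℝ), fun n => mem_range_self _, ?_⟩
    ext y
    simp only [mem_iUnion, mem_Iio, mem_univ, iff_true]
    exact exists_nat_gt y
  have h0 : (inferInstance : MeasurableSpace ℝ) = .generateFrom (range Iio) :=
    BorelSpace.measurable_eq.trans (borel_eq_generateFrom_Iio ℝ)
  have hgen : (inferInstance : MeasurableSpace (Fin d → ℝ)) =
      MeasurableSpace.generateFrom
        (Set.pi univ '' Set.pi univ fun _ : Fin d => range (Iio : ℝ → Set ℝ)) := by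
    have := generateFrom_pi_eq (C := fun _ : Fin d => range (Iio : ℝ → Set ℝ)) hspan
    rw [← this]
    show MeasurableSpace.pi = _
    congr 1
    funext _
    exact h0
  refine ext_of_generate_finite _ hgen (IsPiSystem.pi fun _ => isPiSystem_Iio) ?_ (by simp)
  rintro s ⟨t, ht, rfl⟩
  have : ∀ i, ∃ y : ℝ, t i = Iio y := fun i => by
    obtain ⟨y, hy⟩ := ht i (mem_univ i)
    exact ⟨y, hy.symm⟩
  choose y hy using this
  have hts : (Set.pi univ t) = Set.pi univ fun i => Iio (y i) := by
    apply Set.pi_congr rfl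
    intro i _
    exact hy i
  rw [hts]
  exact key y
end

section
/- (Bayesian inference is strongly calibrated.) Let ρ be a probability measure on ℝ^d × Y, where Y is a standard Borel space, representing the joint law of a parameter θ and data y. Let κ : Y → P(ℝ^d) be the conditional distribution of θ given y (a disintegration of ρ over its second marginal). Let f : ℝ^d → ℝ be measurable with range in an open interval (a,b) and suppose that for (second-marginal)-almost every y the pushforward f_#(κ(y)) is regular on (a,b). Then the pushforward of ρ under the map (θ, y) ↦ F_{f_#κ(y)}(f(θ)), where F_{f_#κ(y)}(z) := κ(y)({x : f(x) ≤ z}), is the uniform distribution on (0,1). -/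
open MeasureTheory ProbabilityTheory Set
open scoped ENNReal

/-- The uniform probability distribution on the open interval (0,1). -/
noncomputable def unif01 : Measure ℝ := volume.restrict (Ioo (0:ℝ) 1)

lemma unif01_Iic (t : ℝ) : unif01 (Iic t) = ENNReal.ofReal (min t 1) := by
  rw [unif01, Measure.restrict_apply measurableSet_Iic]
  rcases le_or_gt t 0 with h | h
  · have he : Iic t ∩ Ioo 0 1 = ∅ := by
      ext z; simp only [mem_inter_iff, mem_Iic, mem_Ioo, mem_empty_iff_false, iff_false]
      rintro ⟨h1, h2, _⟩; linarith
    rw [he, measure_empty, eq_comm, ENNReal.ofReal_eq_zero]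
    exact le_trans (min_le_left _ _) h
  rcases lt_or_ge t 1 with h1 | h1
  · have he : Iic t ∩ Ioo 0 1 = Ioc 0 t := by
      ext z; simp only [mem_inter_iff, mem_Iic, mem_Ioo, mem_Ioc]
      constructor
      · rintro ⟨hz, hz0, _⟩; exact ⟨hz0, hz⟩
      · rintro ⟨hz0, hz⟩; exact ⟨hz, hz0, lt_of_le_of_lt hz h1⟩
    rw [he, Real.volume_Ioc, min_eq_left h1.le, sub_zero]
  · have he : Iic t ∩ Ioo 0 1 = Ioo 0 1 := by
      rw [inter_eq_right]
      intro z hz; exact le_trans hz.2.le h1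
    rw [he, Real.volume_Ioo, min_eq_right h1]
    norm_num

lemma key (γ : Measure ℝ) [IsProbabilityMeasure γ] (hγ : γ ≪ volume) (t : ℝ) :
    γ {z | (γ (Iic z)).toReal ≤ t} = unif01 (Iic t) := by
  rw [unif01_Iic]
  set F : ℝ → ℝ := fun z => (γ (Iic z)).toReal with hF
  have hfin : ∀ z, γ (Iic z) ≠ ∞ := fun z => measure_ne_top γ _
  have hFmono : Monotone F := fun x y h =>
    ENNReal.toReal_mono (hfin y) (measure_mono (Iic_subset_Iic.2 h))
  rcases lt_or_ge t 0 with ht0 | ht0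
  · have he : {z | F z ≤ t} = ∅ := by
      ext z; simp only [mem_setOf_eq, mem_empty_iff_false, iff_false, not_le]
      exact lt_of_lt_of_le ht0 ENNReal.toReal_nonneg
    rw [he, measure_empty, eq_comm, ENNReal.ofReal_eq_zero]
    exact le_trans (min_le_left _ _) ht0.le
  rcases le_or_gt 1 t with ht1 | ht1
  · have he : {z | F z ≤ t} = univ := by
      ext z; simp only [mem_setOf_eq, mem_univ, iff_true]
      refine le_trans ?_ ht1
      have : γ (Iic z) ≤ 1 := prob_le_one
      simpa using ENNReal.toReal_mono (by norm_num) this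
    rw [he, measure_univ, min_eq_right ht1]
    norm_num
  -- now 0 ≤ t < 1
  have hmin : min t 1 = t := min_eq_left ht1.le
  rw [hmin]
  -- empty intersection at -∞
  have hInterEmpty : (⋂ n : ℕ, Iic (-(n:ℝ))) = (∅ : Set ℝ) := by
    ext z
    simp only [mem_iInter, mem_Iic, mem_empty_iff_false, iff_false, not_forall, not_le]
    obtain ⟨n, hn⟩ := exists_nat_gt (-z)
    exact ⟨n, by linarith⟩
  rcases eq_empty_or_nonempty {z | F z ≤ t} with hS | hS
  · -- S empty forces t = 0 essentially
    have hall : ∀ z, t < F z := by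
      intro z
      by_contra h
      push_neg at h
      exact absurd hS (Nonempty.ne_empty ⟨z, h⟩)
    have hle : ENNReal.ofReal t ≤ 0 := by
      have h1 : ∀ n : ℕ, ENNReal.ofReal t ≤ γ (Iic (-(n:ℝ))) := by
        intro n
        have := hall (-(n:ℝ))
        calc ENNReal.ofReal t ≤ ENNReal.ofReal (F (-(n:ℝ))) := ENNReal.ofReal_le_ofReal this.le
          _ = γ (Iic (-(n:ℝ))) := ENNReal.ofReal_toReal (hfin _)
      have h2 : ENNReal.ofReal t ≤ γ (⋂ n : ℕ, Iic (-(n:ℝ))) := by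
        have hanti : Antitone (fun n : ℕ => Iic (-(n:ℝ))) := by
          intro n m hnm
          exact Iic_subset_Iic.2 (by exact_mod_cast neg_le_neg (by exact_mod_cast hnm))
        rw [hanti.measure_iInter (fun n => measurableSet_Iic.nullMeasurableSet)
          ⟨0, measure_ne_top _ _⟩]
        exact le_iInf h1
      rwa [hInterEmpty, measure_empty] at h2
    rw [hS, measure_empty, eq_comm, ENNReal.ofReal_eq_zero]
    simpa using hle
  -- S nonempty
  have hbdd : BddAbove {z | F z ≤ t} := by
    have htend := tendsto_measure_Iic_atTop γ
    rw [measure_univ] at htend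
    have hlt : ENNReal.ofReal t < 1 := by
      rw [← ENNReal.ofReal_one]
      exact ENNReal.ofReal_lt_ofReal_iff_of_nonneg ht0 |>.2 ht1
    have hev : ∀ᶠ x in Filter.atTop, ENNReal.ofReal t < γ (Iic x) :=
      htend.eventually (eventually_gt_nhds hlt)
    obtain ⟨z₀, hz₀⟩ := Filter.eventually_atTop.1 hev
    refine ⟨z₀, fun z hz => ?_⟩
    by_contra h
    push_neg at h
    have := hz₀ z h.le
    have : t < F z := by
      have := ENNReal.toReal_lt_toReal ENNReal.ofReal_ne_top (hfin z) |>.2 this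
      rwa [ENNReal.toReal_ofReal ht0] at this
    exact absurd hz (by simp only [mem_setOf_eq]; push_neg; exact this)
  set s := sSup {z | F z ≤ t} with hs
  have hIioS : Iio s ⊆ {z | F z ≤ t} := by
    intro z hz
    obtain ⟨z', hz', hzz'⟩ := exists_lt_of_lt_csSup hS hz
    exact le_trans (hFmono hzz'.le) hz'
  have hSIic : {z | F z ≤ t} ⊆ Iic s := fun z hz => le_csSup hbdd hz
  have hIioIic : γ (Iic s) = γ (Iio s) := by
    have hds : Iic s = Iio s ∪ {s} := (Iio_union_right).symm
    refine le_antisymm ?_ (measure_mono Iio_subset_Iic_self)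
    calc γ (Iic s) = γ (Iio s ∪ {s}) := by rw [hds]
      _ ≤ γ (Iio s) + γ {s} := measure_union_le _ _
      _ = γ (Iio s) := by rw [hγ Real.volume_singleton, add_zero]
  have hle : γ (Iic s) ≤ ENNReal.ofReal t := by
    rw [hIioIic]
    have hunion : Iio s = ⋃ n : ℕ, Iic (s - 1/(n+1)) := by
      ext z
      simp only [mem_Iio, mem_iUnion, mem_Iic]
      constructor
      · intro hz
        obtain ⟨n, hn⟩ := exists_nat_one_div_lt (sub_pos.2 hz)
        exact ⟨n, by push_cast at hn ⊢; linarith⟩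
      · rintro ⟨n, hn⟩
        have : (0:ℝ) < 1/(n+1) := by positivity
        linarith
    have hmonoseq : Monotone (fun n : ℕ => Iic (s - 1/((n:ℝ)+1))) := by
      intro n m hnm
      refine Iic_subset_Iic.2 (by
        have : (1:ℝ)/((m:ℝ)+1) ≤ 1/((n:ℝ)+1) := by
          apply one_div_le_one_div_of_le (by positivity)
          exact_mod_cast add_le_add_left (Nat.cast_le.2 hnm) 1
        linarith)
    rw [hunion, hmonoseq.measure_iUnion]
    refine iSup_le fun n => ?_
    have hz : s - 1/((n:ℝ)+1) < s := by
      have : (0:ℝ) < 1/((n:ℝ)+1) := by positivity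
      linarith
    have hmem : F (s - 1/((n:ℝ)+1)) ≤ t := hIioS hz
    calc γ (Iic (s - 1/((n:ℝ)+1))) = ENNReal.ofReal (F (s - 1/((n:ℝ)+1))) :=
          (ENNReal.ofReal_toReal (hfin _)).symm
      _ ≤ ENNReal.ofReal t := ENNReal.ofReal_le_ofReal hmem
  have hge : ENNReal.ofReal t ≤ γ (Iic s) := by
    by_contra h
    push_neg at h
    have hinter : (⋂ n : ℕ, Iic (s + 1/((n:ℝ)+1))) = Iic s := by
      ext z
      simp only [mem_iInter, mem_Iic]
      constructor
      · intro hz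
        by_contra hzs
        push_neg at hzs
        obtain ⟨n, hn⟩ := exists_nat_one_div_lt (sub_pos.2 hzs)
        have := hz n
        push_cast at hn
        linarith
      · intro hz n
        have : (0:ℝ) < 1/((n:ℝ)+1) := by positivity
        linarith
    have hanti : Antitone (fun n : ℕ => Iic (s + 1/((n:ℝ)+1))) := by
      intro n m hnm
      refine Iic_subset_Iic.2 (by
        have : (1:ℝ)/((m:ℝ)+1) ≤ 1/((n:ℝ)+1) := by
          apply one_div_le_one_div_of_le (by positivity)
          exact_mod_cast add_le_add_left (Nat.cast_le.2 hnm) 1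
        linarith)
    have heq := hanti.measure_iInter (μ := γ) (fun n => measurableSet_Iic.nullMeasurableSet)
      ⟨0, measure_ne_top _ _⟩
    rw [hinter] at heq
    rw [heq] at h
    obtain ⟨n, hn⟩ := iInf_lt_iff.1 h
    have hF : F (s + 1/((n:ℝ)+1)) ≤ t := by
      have := ENNReal.toReal_lt_toReal (hfin _) ENNReal.ofReal_ne_top |>.2 hn
      rw [ENNReal.toReal_ofReal ht0] at this
      exact this.le
    have : s + 1/((n:ℝ)+1) ≤ s := le_csSup hbdd hF
    have hp : (0:ℝ) < 1/((n:ℝ)+1) := by positivity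
    linarith
  refine le_antisymm ?_ ?_
  · exact le_trans (measure_mono hSIic) hle
  · exact le_trans hge (by rw [hIioIic]; exact measure_mono hIioS)

/-- Bayesian inference is strongly calibrated: if ρ is the joint law of (θ, y), κ is the
conditional distribution of θ given y (a disintegration of ρ over its second marginal),
and f is a test function whose pushforward under κ(y) is almost surely regular on (a,b),
then the pushforward of ρ under (θ, y) ↦ F_{f_#κ(y)}(f(θ)) is uniform on (0,1). -/
theorem stmt_9 {d : ℕ} {Y : Type*} [MeasurableSpace Y] [StandardBorelSpace Y]
    (ρ : Measure ((Fin d → ℝ) × Y)) [IsProbabilityMeasure ρ]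
    (κ : Kernel Y (Fin d → ℝ)) [IsMarkovKernel κ]
    (hdis : ∀ (A : Set (Fin d → ℝ)) (B : Set Y), MeasurableSet A → MeasurableSet B →
      ρ (A ×ˢ B) = ∫⁻ y in B, κ y A ∂(ρ.map Prod.snd))
    (f : (Fin d → ℝ) → ℝ) (hf : Measurable f)
    (a b : EReal) (hab : a < b)
    (hrange : ∀ x, a < (f x : EReal) ∧ (f x : EReal) < b)
    (hreg : ∀ᵐ y ∂(ρ.map Prod.snd), regularOn ((κ y).map f) a b) :
    ρ.map (fun p : (Fin d → ℝ) × Y => ((κ p.2) {x | f x ≤ f p.1}).toReal) = unif01 := by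
  set ν := ρ.map Prod.snd with hν
  haveI : IsProbabilityMeasure ν := Measure.isProbabilityMeasure_map measurable_snd.aemeasurable
  set g : (Fin d → ℝ) × Y → ℝ := fun p => ((κ p.2) {x | f x ≤ f p.1}).toReal with hgdef
  -- measurability of g
  have hT : MeasurableSet {q : (Y × ℝ) × (Fin d → ℝ) | f q.2 ≤ q.1.2} :=
    measurableSet_le (hf.comp measurable_snd) measurable_fst.snd
  have hh : Measurable fun q : Y × ℝ => (κ.comap Prod.fst measurable_fst) q
      (Prod.mk q ⁻¹' {q : (Y × ℝ) × (Fin d → ℝ) | f q.2 ≤ q.1.2}) :=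
    Kernel.measurable_kernel_prodMk_left hT
  have hh2 : Measurable fun q : Y × ℝ => (κ q.1) {x | f x ≤ q.2} := hh
  have hgm : Measurable g := by
    have hc : Measurable fun p : (Fin d → ℝ) × Y => (κ p.2) {x | f x ≤ f p.1} :=
      hh2.comp (measurable_snd.prodMk (hf.comp measurable_fst))
    exact hc.ennreal_toReal
  -- disintegration as compProd
  have hρ : ρ = (ν ⊗ₘ κ).map Prod.swap := by
    refine ext_of_generate_finite _ generateFrom_prod.symm isPiSystem_prod ?_ ?_
    · rintro s ⟨A, hA, B, hB, rfl⟩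
      have hA' : MeasurableSet A := hA
      have hB' : MeasurableSet B := hB
      rw [Measure.map_apply measurable_swap (hA'.prod hB')]
      have hsw : Prod.swap ⁻¹' (A ×ˢ B) = B ×ˢ A := by
        ext p; simp [and_comm]
      rw [hsw, Measure.compProd_apply_prod hB' hA']
      exact hdis A B hA' hB'
    · rw [Measure.map_apply measurable_swap MeasurableSet.univ]
      simp
  have hdisS : ∀ S : Set ((Fin d → ℝ) × Y), MeasurableSet S →
      ρ S = ∫⁻ y, κ y {x | (x, y) ∈ S} ∂ν := by
    intro S hS
    rw [hρ, Measure.map_apply measurable_swap hS,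
      Measure.compProd_apply (hS.preimage measurable_swap)]
    rfl
  haveI : IsProbabilityMeasure (ρ.map g) := Measure.isProbabilityMeasure_map hgm.aemeasurable
  refine Measure.ext_of_Iic (ρ.map g) unif01 fun t => ?_
  rw [Measure.map_apply hgm measurableSet_Iic, hdisS _ (hgm measurableSet_Iic)]
  have hae : ∀ᵐ y ∂ν, κ y {x | (x, y) ∈ g ⁻¹' Iic t} = unif01 (Iic t) := by
    filter_upwards [hreg] with y hy
    haveI : IsProbabilityMeasure ((κ y).map f) := Measure.isProbabilityMeasure_map hf.aemeasurable
    have hac : (κ y).map f ≪ volume :=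
      hy.2.1.trans (Measure.absolutelyContinuous_of_le Measure.restrict_le_self)
    have hGmono : Monotone fun z => (((κ y).map f) (Iic z)).toReal := fun u v huv =>
      ENNReal.toReal_mono (measure_ne_top _ _) (measure_mono (Iic_subset_Iic.2 huv))
    have hGset : MeasurableSet {z | (((κ y).map f) (Iic z)).toReal ≤ t} :=
      hGmono.measurable measurableSet_Iic
    have hsec : {x | (x, y) ∈ g ⁻¹' Iic t} =
        f ⁻¹' {z | (((κ y).map f) (Iic z)).toReal ≤ t} := by
      ext x
      simp only [mem_setOf_eq, mem_preimage, mem_Iic, hgdef]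
      rw [Measure.map_apply hf measurableSet_Iic]
      rfl
    rw [hsec, ← Measure.map_apply hf hGset, key _ hac t]
  rw [lintegral_congr_ae hae, lintegral_const, measure_univ, mul_one]
end

section
/- (The 'mirror Bayes' learning procedure is not strongly calibrated.) Let Φ denote the CDF of the standard Gaussian N(0,1), and let ρ be the joint law of (θ, y) where θ ~ N(0,1) and y | θ ~ N(θ, 1). The CDF of the mirror-Bayes output N(−y/2, 1/2) evaluated at θ is Φ(√2 (θ + y/2)). Then the pushforward of ρ under the map (θ, y) ↦ Φ(√2 (θ + y/2)) is NOT the uniform distribution on (0,1). -/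
open MeasureTheory ProbabilityTheory Set
open scoped ENNReal NNReal Real

/-- The CDF Φ of the standard Gaussian N(0,1). -/
noncomputable def stdGaussCDF (x : ℝ) : ℝ := ((gaussianReal 0 1) (Iic x)).toReal

/-- The joint law of (θ, y) where θ ~ N(0,1) and y | θ ~ N(θ, 1). -/
noncomputable def jointLaw : Measure (ℝ × ℝ) :=
  (gaussianReal 0 1).bind (fun θ : ℝ => (gaussianReal θ 1).map (fun y : ℝ => (θ, y)))

lemma stdGaussCDF_strictMono : StrictMono stdGaussCDF := by
  intro a b hab
  have hpos : gaussianReal 0 1 (Ioc a b) ≠ 0 := by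
    intro h0
    have h1 : volume (Ioc a b) = 0 := gaussianReal_absolutelyContinuous' 0 one_ne_zero h0
    rw [Real.volume_Ioc] at h1
    simp only [ENNReal.ofReal_eq_zero] at h1
    linarith
  have hsplit : gaussianReal 0 1 (Iic b)
      = gaussianReal 0 1 (Iic a) + gaussianReal 0 1 (Ioc a b) := by
    rw [← measure_union (Set.Iic_disjoint_Ioc le_rfl) measurableSet_Ioc,
      Iic_union_Ioc_eq_Iic hab.le]
  have hlt : gaussianReal 0 1 (Iic a) < gaussianReal 0 1 (Iic b) := by
    rw [hsplit]
    exact ENNReal.lt_add_right (measure_ne_top _ _) hpos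
  exact ENNReal.toReal_lt_toReal (measure_ne_top _ _) (measure_ne_top _ _) |>.mpr hlt

lemma stdGaussCDF_le_one (x : ℝ) : stdGaussCDF x ≤ 1 := by
  have h : gaussianReal 0 1 (Iic x) ≤ 1 := prob_le_one
  have := ENNReal.toReal_mono (by simp) h
  simpa [stdGaussCDF] using this

lemma measurable_gaussianKernel (a : ℝ) (v : ℝ≥0) (hv : v ≠ 0) :
    Measurable (fun θ : ℝ => gaussianReal (a * θ) v) := by
  refine Measure.measurable_of_measurable_coe _ (fun s hs => ?_)
  simp_rw [gaussianReal_apply _ hv s]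
  have hm : Measurable (Function.uncurry fun θ x => gaussianPDF (a * θ) v x) := by
    apply Measurable.ennreal_ofReal
    unfold gaussianPDFReal
    fun_prop
  exact hm.lintegral_prod_right'

lemma measurable_jointKernel :
    Measurable (fun θ : ℝ => (gaussianReal θ 1).map (fun y : ℝ => (θ, y))) := by
  refine Measure.measurable_of_measurable_coe _ (fun s hs => ?_)
  have key : ∀ θ : ℝ, (gaussianReal θ 1).map (fun y : ℝ => (θ, y)) s
      = ∫⁻ y, s.indicator (fun _ => (1:ℝ≥0∞)) (θ, y) * gaussianPDF θ 1 y := by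
    intro θ
    rw [Measure.map_apply measurable_prodMk_left hs, gaussianReal_apply _ one_ne_zero,
      ← lintegral_indicator (measurable_prodMk_left hs)]
    congr 1
    ext y
    by_cases hy : (θ, y) ∈ s
    · simp [Set.indicator_of_mem, hy, Set.indicator_of_mem (show y ∈ Prod.mk θ ⁻¹' s from hy)]
    · simp [Set.indicator_of_notMem, hy,
        Set.indicator_of_notMem (show y ∉ Prod.mk θ ⁻¹' s from hy)]
  simp_rw [key]
  have hm : Measurable (Function.uncurry fun (θ : ℝ) (y : ℝ) =>
      s.indicator (fun _ => (1:ℝ≥0∞)) (θ, y) * gaussianPDF θ 1 y) := by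
    apply Measurable.mul
    · exact (measurable_const.indicator hs)
    · apply Measurable.ennreal_ofReal
      unfold gaussianPDFReal
      fun_prop
  exact hm.lintegral_prod_right'

lemma conv_pointwise (a : ℝ) (v : ℝ≥0) (hv : v ≠ 0) (x : ℝ) :
    ∫⁻ θ, gaussianPDF 0 1 θ * gaussianPDF (a * θ) v x ∂volume
      = gaussianPDF 0 (⟨a ^ 2, sq_nonneg a⟩ + v) x := by
  have hvr : (0:ℝ) < (v:ℝ) := by
    have := v.coe_nonneg
    rcases this.lt_or_eq with h | h
    · exact h
    · exact absurd (NNReal.coe_eq_zero.mp h.symm) hv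
  set vr : ℝ := (v:ℝ) with hvrdef
  set w : ℝ := a ^ 2 + vr with hwdef
  have hw : 0 < w := by positivity
  set k : ℝ := w / (2 * vr) with hkdef
  have hk : 0 < k := by positivity
  set m : ℝ := a * x / w with hmdef
  have hcoe : ((⟨a ^ 2, sq_nonneg a⟩ + v : ℝ≥0) : ℝ) = w := by
    rfl
  have key : ∀ θ : ℝ, gaussianPDFReal 0 1 θ * gaussianPDFReal (a * θ) v x
      = gaussianPDFReal 0 (⟨a ^ 2, sq_nonneg a⟩ + v) x
        * ((Real.sqrt (π / k))⁻¹ * Real.exp (-k * (θ - m) ^ 2)) := by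
    intro θ
    unfold gaussianPDFReal
    rw [hcoe]
    push_cast
    have hexp : Real.exp (-(θ - 0) ^ 2 / (2 * 1)) * Real.exp (-(x - a * θ) ^ 2 / (2 * vr))
        = Real.exp (-(x - 0) ^ 2 / (2 * w)) * Real.exp (-k * (θ - m) ^ 2) := by
      rw [← Real.exp_add, ← Real.exp_add]
      congr 1
      rw [hkdef, hmdef]
      field_simp
      ring
    have hcoef : (Real.sqrt (2 * π * 1))⁻¹ * (Real.sqrt (2 * π * vr))⁻¹
        = (Real.sqrt (2 * π * w))⁻¹ * (Real.sqrt (π / k))⁻¹ := by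
      rw [← mul_inv, ← mul_inv, ← Real.sqrt_mul (by positivity), ← Real.sqrt_mul (by positivity)]
      congr 2
      rw [hkdef]
      field_simp
    calc (Real.sqrt (2 * π * 1))⁻¹ * Real.exp (-(θ - 0) ^ 2 / (2 * 1))
          * ((Real.sqrt (2 * π * vr))⁻¹ * Real.exp (-(x - a * θ) ^ 2 / (2 * vr)))
        = ((Real.sqrt (2 * π * 1))⁻¹ * (Real.sqrt (2 * π * vr))⁻¹)
          * (Real.exp (-(θ - 0) ^ 2 / (2 * 1)) * Real.exp (-(x - a * θ) ^ 2 / (2 * vr))) := by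
          ring
      _ = ((Real.sqrt (2 * π * w))⁻¹ * (Real.sqrt (π / k))⁻¹)
          * (Real.exp (-(x - 0) ^ 2 / (2 * w)) * Real.exp (-k * (θ - m) ^ 2)) := by
          rw [hexp, hcoef]
      _ = (Real.sqrt (2 * π * w))⁻¹ * Real.exp (-(x - 0) ^ 2 / (2 * w))
          * ((Real.sqrt (π / k))⁻¹ * Real.exp (-k * (θ - m) ^ 2)) := by ring
  have hint : Integrable (fun θ : ℝ => gaussianPDFReal 0 1 θ * gaussianPDFReal (a * θ) v x) := by
    simp_rw [key]
    have h1 : Integrable (fun θ : ℝ => Real.exp (-k * (θ - m) ^ 2)) :=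
      (integrable_exp_neg_mul_sq hk).comp_sub_right m
    exact (h1.const_mul _).const_mul _
  have hnn : ∀ θ : ℝ, 0 ≤ gaussianPDFReal 0 1 θ * gaussianPDFReal (a * θ) v x :=
    fun θ => mul_nonneg (gaussianPDFReal_nonneg _ _ _) (gaussianPDFReal_nonneg _ _ _)
  have hlhs : ∫⁻ θ, gaussianPDF 0 1 θ * gaussianPDF (a * θ) v x ∂volume
      = ENNReal.ofReal (∫ θ, gaussianPDFReal 0 1 θ * gaussianPDFReal (a * θ) v x) := by
    rw [ofReal_integral_eq_lintegral_ofReal hint (ae_of_all _ hnn)]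
    congr 1
    ext θ
    rw [gaussianPDF, gaussianPDF, ← ENNReal.ofReal_mul (gaussianPDFReal_nonneg _ _ _)]
  rw [hlhs]
  have hintegral : ∫ θ, gaussianPDFReal 0 1 θ * gaussianPDFReal (a * θ) v x
      = gaussianPDFReal 0 (⟨a ^ 2, sq_nonneg a⟩ + v) x := by
    simp_rw [key]
    rw [integral_const_mul, integral_const_mul]
    have : ∫ θ : ℝ, Real.exp (-k * (θ - m) ^ 2) = Real.sqrt (π / k) := by
      rw [integral_sub_right_eq_self (fun u => Real.exp (-k * u ^ 2)) m]
      exact integral_gaussian k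
    rw [this, inv_mul_cancel₀ (by positivity), mul_one]
  rw [hintegral]
  rfl

lemma gaussian_conv (a : ℝ) (v : ℝ≥0) (hv : v ≠ 0) :
    (gaussianReal 0 1).bind (fun θ : ℝ => gaussianReal (a * θ) v)
      = gaussianReal 0 (⟨a ^ 2, sq_nonneg a⟩ + v) := by
  have hw : (⟨a ^ 2, sq_nonneg a⟩ + v : ℝ≥0) ≠ 0 := by
    intro h
    exact hv (by simpa using (add_eq_zero.mp h).2)
  ext s hs
  rw [Measure.bind_apply hs (measurable_gaussianKernel a v hv).aemeasurable]
  simp_rw [gaussianReal_apply _ hv s]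
  have hpdfjoint : Measurable (Function.uncurry fun (θ x : ℝ) => gaussianPDF (a * θ) v x) := by
    apply Measurable.ennreal_ofReal
    unfold gaussianPDFReal
    fun_prop
  have hg : Measurable (fun θ : ℝ => ∫⁻ x in s, gaussianPDF (a * θ) v x) :=
    hpdfjoint.lintegral_prod_right'
  rw [gaussianReal_of_var_ne_zero _ one_ne_zero,
    lintegral_withDensity_eq_lintegral_mul _ (measurable_gaussianPDF 0 1) hg]
  have hswap : ∫⁻ θ, (gaussianPDF 0 1 * fun θ => ∫⁻ x in s, gaussianPDF (a * θ) v x) θ ∂volume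
      = ∫⁻ x in s, ∫⁻ θ, gaussianPDF 0 1 θ * gaussianPDF (a * θ) v x ∂volume := by
    simp only [Pi.mul_apply]
    have h1 : ∀ θ : ℝ, gaussianPDF 0 1 θ * ∫⁻ x in s, gaussianPDF (a * θ) v x
        = ∫⁻ x in s, gaussianPDF 0 1 θ * gaussianPDF (a * θ) v x := fun θ =>
      (lintegral_const_mul _ (measurable_gaussianPDF _ _)).symm
    simp_rw [h1]
    rw [lintegral_lintegral_swap]
    exact ((measurable_gaussianPDF 0 1).comp measurable_fst).mul
      (hpdfjoint.comp measurable_id) |>.aemeasurable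
  rw [hswap]
  simp_rw [conv_pointwise a v hv]
  rw [← gaussianReal_apply _ hw s]

lemma map_bind' {α β γ : Type*} [MeasurableSpace α] [MeasurableSpace β] [MeasurableSpace γ]
    {m : Measure α} {f : α → Measure β} {g : β → γ} (hf : Measurable f) (hg : Measurable g) :
    (m.bind f).map g = m.bind (fun a => (f a).map g) := by
  conv_lhs => rw [← Measure.bind_dirac_eq_map _ hg]
  rw [Measure.bind_bind hf.aemeasurable
    (show Measurable fun x => Measure.dirac (g x) from Measure.measurable_dirac.comp hg).aemeasurable]
  congr 1
  ext a : 1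
  exact Measure.bind_dirac_eq_map _ hg

lemma law_q : jointLaw.map (fun p : ℝ × ℝ => Real.sqrt 2 * (p.1 + p.2 / 2))
    = gaussianReal 0 5 := by
  have hq : Measurable (fun p : ℝ × ℝ => Real.sqrt 2 * (p.1 + p.2 / 2)) := by fun_prop
  rw [jointLaw, map_bind' measurable_jointKernel hq]
  have hinner : (fun θ : ℝ => ((gaussianReal θ 1).map (fun y : ℝ => (θ, y))).map
        (fun p : ℝ × ℝ => Real.sqrt 2 * (p.1 + p.2 / 2)))
      = fun θ : ℝ => gaussianReal ((Real.sqrt 2 / 2 + Real.sqrt 2) * θ) (1/2) := by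
    ext θ : 1
    rw [Measure.map_map hq measurable_prodMk_left]
    have h1 : ((fun p : ℝ × ℝ => Real.sqrt 2 * (p.1 + p.2 / 2)) ∘ (fun y : ℝ => (θ, y)))
        = (fun z : ℝ => z + Real.sqrt 2 * θ) ∘ (fun y : ℝ => (Real.sqrt 2 / 2) * y) := by
      ext y; simp only [Function.comp_apply]; ring
    rw [h1, ← Measure.map_map (measurable_id'.add_const _) (measurable_const_mul _),
      gaussianReal_map_const_mul, gaussianReal_map_add_const]
    congr 1
    · ring
    · ext
      push_cast
      have h2 : Real.sqrt 2 ^ 2 = 2 := Real.sq_sqrt (by norm_num)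
      rw [div_pow, h2]
      norm_num
  rw [hinner, gaussian_conv _ _ (by norm_num)]
  congr 1
  ext
  show (Real.sqrt 2 / 2 + Real.sqrt 2) ^ 2 + ((1/2 : ℝ≥0) : ℝ) = ((5 : ℝ≥0) : ℝ)
  push_cast
  have h2 : Real.sqrt 2 ^ 2 = 2 := Real.sq_sqrt (by norm_num)
  nlinarith [h2]

/-- The 'mirror Bayes' learning procedure is not strongly calibrated: the pushforward of
the joint law of (θ, y) under (θ, y) ↦ Φ(√2 (θ + y/2)), the CDF of N(−y/2, 1/2)
evaluated at θ, is not the uniform distribution on (0,1). -/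
theorem stmt_13 :
    jointLaw.map
      (fun p : ℝ × ℝ => stdGaussCDF (Real.sqrt 2 * (p.1 + p.2 / 2))) ≠ unif01 := by
  intro h
  have hq : Measurable (fun p : ℝ × ℝ => Real.sqrt 2 * (p.1 + p.2 / 2)) := by fun_prop
  have hΦ : Measurable stdGaussCDF := stdGaussCDF_strictMono.monotone.measurable
  have hmap : jointLaw.map (fun p : ℝ × ℝ => stdGaussCDF (Real.sqrt 2 * (p.1 + p.2 / 2)))
      = (gaussianReal 0 5).map stdGaussCDF := by
    rw [← law_q, Measure.map_map hΦ hq]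
    rfl
  -- value of the left side on Iic (stdGaussCDF 1)
  have h5 : gaussianReal 0 5 = (gaussianReal 0 1).map (fun x : ℝ => Real.sqrt 5 * x) := by
    rw [show (fun x : ℝ => Real.sqrt 5 * x) = (Real.sqrt 5 * ·) from rfl,
      gaussianReal_map_const_mul]
    congr 1
    · ring
    · ext
      push_cast
      rw [Real.sq_sqrt (by norm_num : (0:ℝ) ≤ 5)]
      norm_num
  have hsqrt5 : (1:ℝ) < Real.sqrt 5 := by
    rw [show (1:ℝ) = Real.sqrt 1 from (Real.sqrt_one).symm]
    exact Real.sqrt_lt_sqrt (by norm_num) (by norm_num)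
  have hpre : (fun x : ℝ => Real.sqrt 5 * x) ⁻¹' (Iic 1) = Iic (1 / Real.sqrt 5) := by
    ext z
    simp only [mem_preimage, mem_Iic]
    rw [le_div_iff₀ (by positivity)]
    constructor <;> intro hz <;> linarith [hz]
  have hpreΦ : stdGaussCDF ⁻¹' (Iic (stdGaussCDF 1)) = Iic 1 := by
    ext z
    simp only [mem_preimage, mem_Iic]
    exact stdGaussCDF_strictMono.le_iff_le
  have hL : (gaussianReal 0 5).map stdGaussCDF (Iic (stdGaussCDF 1))
      = ENNReal.ofReal (stdGaussCDF (1 / Real.sqrt 5)) := by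
    rw [Measure.map_apply hΦ measurableSet_Iic, hpreΦ, h5,
      Measure.map_apply (measurable_const_mul _) measurableSet_Iic, hpre,
      stdGaussCDF, ENNReal.ofReal_toReal (measure_ne_top _ _)]
  -- value of the right side
  have ht0 : 0 < stdGaussCDF 1 := by
    have h01 : stdGaussCDF 0 < stdGaussCDF 1 := stdGaussCDF_strictMono (by norm_num)
    have h00 : 0 ≤ stdGaussCDF 0 := ENNReal.toReal_nonneg
    linarith
  have ht1 : stdGaussCDF 1 < 1 := by
    have h12 : stdGaussCDF 1 < stdGaussCDF 2 := stdGaussCDF_strictMono (by norm_num)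
    have h21 : stdGaussCDF 2 ≤ 1 := stdGaussCDF_le_one 2
    linarith
  have hR : unif01 (Iic (stdGaussCDF 1)) = ENNReal.ofReal (stdGaussCDF 1) := by
    rw [unif01, Measure.restrict_apply measurableSet_Iic]
    have hset : Iic (stdGaussCDF 1) ∩ Ioo (0:ℝ) 1 = Ioc 0 (stdGaussCDF 1) := by
      ext z
      simp only [mem_inter_iff, mem_Iic, mem_Ioo, mem_Ioc]
      constructor
      · rintro ⟨h1, h2, h3⟩; exact ⟨h2, h1⟩
      · rintro ⟨h1, h2⟩; exact ⟨h2, h1, lt_of_le_of_lt h2 ht1⟩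
    rw [hset, Real.volume_Ioc, sub_zero]
  have heq : ENNReal.ofReal (stdGaussCDF (1 / Real.sqrt 5)) = ENNReal.ofReal (stdGaussCDF 1) := by
    rw [← hL, ← hmap, h, hR]
  have heqr : stdGaussCDF (1 / Real.sqrt 5) = stdGaussCDF 1 :=
    (ENNReal.ofReal_eq_ofReal_iff ENNReal.toReal_nonneg ENNReal.toReal_nonneg).mp heq
  have hlt : stdGaussCDF (1 / Real.sqrt 5) < stdGaussCDF 1 := by
    apply stdGaussCDF_strictMono
    rw [div_lt_one (by positivity)]
    exact hsqrt5
  linarith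
end

section
/- (Fractional posteriors are weakly calibrated if and only if t = 0 or t = 1.) Let σ > 0 and t ∈ [0,1]. Then (N(0,1)).bind(θ ↦ (N(θ,σ²)).bind(y ↦ N(t y/(t+σ²), σ²/(t+σ²)))) = N(0,1) if and only if t = 0 or t = 1. -/
open MeasureTheory ProbabilityTheory
open Real
open scoped ENNReal NNReal

lemma meas_joint (v : ℝ≥0) : Measurable fun p : ℝ × ℝ => gaussianPDF p.1 v p.2 := by
  unfold gaussianPDF gaussianPDFReal
  fun_prop

lemma measurable_gaussianReal_fun (v : ℝ≥0) : Measurable fun x : ℝ => gaussianReal x v := by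
  rcases eq_or_ne v 0 with h | h
  · simpa [h, gaussianReal_zero_var] using Measure.measurable_dirac
  · refine Measure.measurable_of_measurable_coe _ fun s hs => ?_
    simp_rw [gaussianReal_apply _ h s]
    exact Measurable.lintegral_prod_right (meas_joint v)

lemma pdf_mul (m y : ℝ) {v w : ℝ≥0} (hv : v ≠ 0) (hw : w ≠ 0) (x : ℝ) :
    gaussianPDFReal m v x * gaussianPDFReal x w y
      = gaussianPDFReal m (v + w) y *
        gaussianPDFReal (((w : ℝ) * m + (v : ℝ) * y) / ((v : ℝ) + (w : ℝ))) (v * w / (v + w)) x := by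
  have hv' : (0:ℝ) < v := lt_of_le_of_ne v.coe_nonneg (by exact_mod_cast (Ne.symm hv))
  have hw' : (0:ℝ) < w := lt_of_le_of_ne w.coe_nonneg (by exact_mod_cast (Ne.symm hw))
  have hvw : (0:ℝ) < (v:ℝ) + w := by linarith
  have hu : ((v * w / (v + w) : ℝ≥0) : ℝ) = (v:ℝ) * w / ((v:ℝ) + w) := by push_cast; ring
  unfold gaussianPDFReal
  rw [hu]
  push_cast
  rw [mul_mul_mul_comm, mul_mul_mul_comm ((√(2 * π * ((v:ℝ)+w)))⁻¹), ← Real.exp_add, ← Real.exp_add]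
  congr 1
  · rw [← mul_inv, ← mul_inv, ← Real.sqrt_mul (by positivity), ← Real.sqrt_mul (by positivity)]
    congr 2
    field_simp
  · congr 1
    field_simp
    ring

lemma lint_key (m y : ℝ) {v w : ℝ≥0} (hv : v ≠ 0) (hw : w ≠ 0) :
    ∫⁻ x, gaussianPDF m v x * gaussianPDF x w y = gaussianPDF m (v + w) y := by
  have hu : (v * w / (v + w) : ℝ≥0) ≠ 0 := by
    have : v + w ≠ 0 := by simp [add_eq_zero, hv]
    simp [div_eq_zero_iff, hv, hw, this]
  calc ∫⁻ x, gaussianPDF m v x * gaussianPDF x w y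
      = ∫⁻ x, gaussianPDF m (v + w) y *
          gaussianPDF (((w : ℝ) * m + (v : ℝ) * y) / ((v : ℝ) + (w : ℝ))) (v * w / (v + w)) x := by
        congr 1; funext x
        unfold gaussianPDF
        rw [← ENNReal.ofReal_mul (gaussianPDFReal_nonneg _ _ _),
          ← ENNReal.ofReal_mul (gaussianPDFReal_nonneg _ _ _), pdf_mul m y hv hw x]
    _ = gaussianPDF m (v + w) y := by
        rw [lintegral_const_mul _ (measurable_gaussianPDF _ _),
          lintegral_gaussianPDF_eq_one _ hu, mul_one]

lemma gauss_conv (m : ℝ) (v : ℝ≥0) {w : ℝ≥0} (hw : w ≠ 0) :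
    (gaussianReal m v).bind (fun x => gaussianReal x w) = gaussianReal m (v + w) := by
  rcases eq_or_ne v 0 with hv | hv
  · rw [hv, gaussianReal_zero_var, Measure.dirac_bind (measurable_gaussianReal_fun w), zero_add]
  ext s hs
  have hg : Measurable fun a : ℝ => gaussianReal a w s :=
    (Measure.measurable_coe hs).comp (measurable_gaussianReal_fun w)
  rw [Measure.bind_apply hs (measurable_gaussianReal_fun w).aemeasurable,
    gaussianReal_of_var_ne_zero m hv,
    lintegral_withDensity_eq_lintegral_mul _ (measurable_gaussianPDF _ _) hg]
  simp_rw [Pi.mul_apply, gaussianReal_apply _ hw s]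
  calc ∫⁻ x, gaussianPDF m v x * ∫⁻ y in s, gaussianPDF x w y
      = ∫⁻ x, ∫⁻ y in s, gaussianPDF m v x * gaussianPDF x w y :=
        lintegral_congr fun x => (lintegral_const_mul _ (measurable_gaussianPDF x w)).symm
    _ = ∫⁻ y in s, ∫⁻ x, gaussianPDF m v x * gaussianPDF x w y := by
        apply lintegral_lintegral_swap
        exact (((measurable_gaussianPDF m v).comp measurable_fst).mul (meas_joint w)).aemeasurable
    _ = ∫⁻ y in s, gaussianPDF m (v + w) y :=
        lintegral_congr fun y => lint_key m y hv hw
    _ = (gaussianReal m (v + w)) s := (gaussianReal_apply m (by simp [add_eq_zero, hv]) s).symm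

lemma bind_comp_eq_map_bind {μ : Measure ℝ} {f : ℝ → ℝ} (hf : Measurable f)
    {κ : ℝ → Measure ℝ} (hκ : Measurable κ) :
    μ.bind (fun a => κ (f a)) = (μ.map f).bind κ := by
  ext s hs
  have hg : Measurable fun b : ℝ => κ b s := (Measure.measurable_coe hs).comp hκ
  rw [Measure.bind_apply (f := fun a => κ (f a)) hs (hκ.comp hf).aemeasurable, Measure.bind_apply hs hκ.aemeasurable,
    lintegral_map hg hf]

lemma gauss_affine (m : ℝ) (c : ℝ) (v : ℝ≥0) {w : ℝ≥0} (hw : w ≠ 0) :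
    (gaussianReal m v).bind (fun y => gaussianReal (c * y) w)
      = gaussianReal (c * m) (⟨c ^ 2, sq_nonneg c⟩ * v + w) := by
  have h := bind_comp_eq_map_bind (μ := gaussianReal m v) (f := fun y => c * y)
    (measurable_const_mul c) (κ := fun z => gaussianReal z w) (measurable_gaussianReal_fun w)
  rw [h, gaussianReal_map_const_mul, gauss_conv _ _ hw]
  rfl

lemma gauss_var_inj {a b : ℝ≥0} (ha : a ≠ 0) (hb : b ≠ 0)
    (h : gaussianReal 0 a = gaussianReal 0 b) : a = b := by
  have hd : gaussianPDF 0 a =ᵐ[volume] gaussianPDF 0 b := by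
    have h1 := rnDeriv_gaussianReal 0 a
    have h2 := rnDeriv_gaussianReal 0 b
    rw [h] at h1
    exact h1.symm.trans h2
  have hcont : ∀ v : ℝ≥0, Continuous (gaussianPDF 0 v) := by
    intro v
    unfold gaussianPDF gaussianPDFReal
    exact ENNReal.continuous_ofReal.comp (by fun_prop)
  have heq : gaussianPDF 0 a = gaussianPDF 0 b :=
    ((hcont a).ae_eq_iff_eq volume (hcont b)).mp hd
  have h0 := congrFun heq 0
  unfold gaussianPDF gaussianPDFReal at h0
  norm_num at h0
  have ha' : (0:ℝ) < a := lt_of_le_of_ne a.coe_nonneg (by exact_mod_cast (Ne.symm ha))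
  have hb' : (0:ℝ) < b := lt_of_le_of_ne b.coe_nonneg (by exact_mod_cast (Ne.symm hb))
  rw [← ENNReal.ofReal_inv_of_pos (x := √2) (by positivity), ← ENNReal.ofReal_mul (p := (√π)⁻¹) (by positivity), ← ENNReal.ofReal_mul (p := (√(a:ℝ))⁻¹) (by positivity), ← ENNReal.ofReal_mul (p := (√(b:ℝ))⁻¹) (by positivity), ENNReal.ofReal_eq_ofReal_iff (by positivity) (by positivity)] at h0
  have : (a:ℝ) = b := by
    have hc : ((√π)⁻¹ * (√2)⁻¹ : ℝ) ≠ 0 := by positivity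
    have h1 : (√(a:ℝ))⁻¹ = (√(b:ℝ))⁻¹ := mul_right_cancel₀ hc h0
    have h2 : √(a:ℝ) = √(b:ℝ) := inv_injective h1
    have := congrArg (· ^ 2) h2
    simpa [Real.sq_sqrt ha'.le, Real.sq_sqrt hb'.le] using this
  exact_mod_cast this


/-- Fractional posteriors are weakly calibrated if and only if t = 0 or t = 1: the
data-averaged fractional posterior, obtained by sampling θ ~ N(0,1), then
y | θ ~ N(θ, σ²), then ϑ | y ~ N(t y/(t+σ²), σ²/(t+σ²)), equals the prior N(0,1) iff
t = 0 or t = 1. -/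
theorem stmt_17 (σ t : ℝ) (hσ : 0 < σ) (ht : t ∈ Set.Icc (0:ℝ) 1) :
    (gaussianReal 0 1).bind
      (fun θ : ℝ => (gaussianReal θ ((σ ^ 2).toNNReal)).bind
        (fun y : ℝ => gaussianReal (t * y / (t + σ ^ 2))
          ((σ ^ 2 / (t + σ ^ 2)).toNNReal))) = gaussianReal 0 1 ↔
    t = 0 ∨ t = 1 := by
  obtain ⟨ht0, ht1⟩ := ht
  have hσ2 : (0:ℝ) < σ ^ 2 := by positivity
  have hd : (0:ℝ) < t + σ ^ 2 := by linarith
  have hWpos : (0:ℝ) < σ ^ 2 / (t + σ ^ 2) := by positivity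
  set c : ℝ := t / (t + σ ^ 2) with hc
  set V : ℝ≥0 := (σ ^ 2).toNNReal with hV
  set W : ℝ≥0 := (σ ^ 2 / (t + σ ^ 2)).toNNReal with hW
  have hWne : W ≠ 0 := by
    simp only [hW, ne_eq, Real.toNNReal_eq_zero, not_le]
    exact hWpos
  have step1 : ∀ θ : ℝ,
      (gaussianReal θ V).bind (fun y : ℝ => gaussianReal (t * y / (t + σ ^ 2)) W)
        = gaussianReal (c * θ) (⟨c ^ 2, sq_nonneg c⟩ * V + W) := by
    intro θ
    have hfun : (fun y : ℝ => gaussianReal (t * y / (t + σ ^ 2)) W)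
        = fun y => gaussianReal (c * y) W := by
      funext y
      rw [hc, div_mul_eq_mul_div]
    rw [hfun, gauss_affine θ c V hWne]
  simp only [step1]
  rw [gauss_affine 0 c 1 (fun h => hWne ((add_eq_zero.mp h).2)), mul_zero]
  set K : ℝ≥0 := ⟨c ^ 2, sq_nonneg c⟩ * 1 + (⟨c ^ 2, sq_nonneg c⟩ * V + W) with hK
  have hKcoe : (K : ℝ) = c ^ 2 * 1 + (c ^ 2 * σ ^ 2 + σ ^ 2 / (t + σ ^ 2)) := by
    simp [hK, hV, hW, NNReal.coe_add, NNReal.coe_mul,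
      Real.coe_toNNReal _ (le_of_lt hσ2), Real.coe_toNNReal _ (le_of_lt hWpos)]
    erw [NNReal.coe_mul, NNReal.coe_mul, Real.coe_toNNReal _ (le_of_lt hσ2)]
    show c ^ 2 * 1 + (c ^ 2 * σ ^ 2 + σ ^ 2 / (t + σ ^ 2)) = _
    ring
  have hdne : t + σ ^ 2 ≠ 0 := ne_of_gt hd
  constructor
  · intro h
    have hKne : K ≠ 0 := fun h0 => hWne ((add_eq_zero.mp ((add_eq_zero.mp h0).2)).2)
    have hK1 : K = 1 := gauss_var_inj hKne one_ne_zero h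
    have hK1' : (K : ℝ) = 1 := by exact_mod_cast hK1
    rw [hKcoe] at hK1'
    rw [hc] at hK1'
    field_simp at hK1'
    have key : σ ^ 2 * (t + σ ^ 2) ^ 3 * (t * (t - 1)) = 0 := by linear_combination (t + σ ^ 2) ^ 3 * hK1'
    have htt : t * (t - 1) = 0 := by
      rcases mul_eq_zero.mp key with h' | h'
      · exact absurd h' (by positivity)
      · exact h'
    rcases mul_eq_zero.mp htt with h' | h'
    · exact Or.inl h'
    · exact Or.inr (by linarith)
  · intro h
    have hK1 : K = 1 := by
      apply NNReal.coe_injective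
      rw [hKcoe, NNReal.coe_one, hc]
      rcases h with h | h <;> subst h
      · field_simp
        ring
      · field_simp
        ring
    rw [hK1]
end
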